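/- arXiv:1312.4289 — 5 statements merged into one kernel-verified Lean document; each statement's English description precedes it below -/
import Mathlib

section
/- Fix an integer l ≥ 1. For all sufficiently large integers N, C_{0,1,l}(N) = ((−1)^{l−1}/N^l) · (1/(2πi)) ∮_{|z|=5} F(z,N) dz, where the contour is the circle of radius 5 around the origin traversed once counterclockwise. -/
open Complex Metric Finset Set Filter

lemma exp_ne_one' {w : ℂ} (hw : w ≠ 0) (h2 : ‖w‖ < 2 * Real.pi) :
    Complex.exp w ≠ 1 := by
  rw [Ne, Complex.exp_eq_one_iff]
  rintro ⟨n, hne⟩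
  rcases eq_or_ne n 0 with rfl | hn
  · simp at hne; exact hw hne
  · have h1 : (1:ℝ) ≤ |(n:ℝ)| := by exact_mod_cast Int.one_le_abs hn
    have habs : ‖w‖ = |(n:ℝ)| * (2 * Real.pi) := by
      rw [hne]
      simp [norm_mul, Complex.norm_I, Complex.norm_real, abs_of_pos Real.pi_pos,
        Complex.norm_intCast]
    nlinarith [Real.pi_pos]

lemma circleIntegral_add' {f g : ℂ → ℂ} {c : ℂ} {R : ℝ} (hf : CircleIntegrable f c R)
    (hg : CircleIntegrable g c R) :
    (∮ z in C(c, R), (f z + g z)) = (∮ z in C(c, R), f z) + ∮ z in C(c, R), g z := by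
  simp only [circleIntegral, smul_add]
  exact intervalIntegral.integral_add hf.out hg.out

lemma circleIntegral_finset_sum {ι : Type*} (s : Finset ι) (f : ι → ℂ → ℂ) (c : ℂ) (R : ℝ)
    (h : ∀ i ∈ s, CircleIntegrable (f i) c R) :
    (∮ z in C(c, R), ∑ i ∈ s, f i z) = ∑ i ∈ s, ∮ z in C(c, R), f i z := by
  simp only [circleIntegral, Finset.smul_sum]
  exact intervalIntegral.integral_finset_sum fun i hi => (h i hi).out


lemma hasDerivAt_expdiv (N : ℕ) (z : ℂ) :
    HasDerivAt (fun z : ℂ => Complex.exp (z / N)) (Complex.exp (z / N) * (1 / N)) z := by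
  simpa using ((hasDerivAt_id z).div_const (N:ℂ)).cexp

lemma integral_exp_zpow_eq_zero {N : ℕ} (hN : 0 < N) {ρ : ℝ} (hρ : 0 < ρ)
    (hρ' : ρ / N < 2 * Real.pi) {n : ℤ} (hn : n ≤ -2) :
    (∮ z in C(0, ρ), Complex.exp (z / N) * (Complex.exp (z / N) - 1) ^ n) = 0 := by
  have hNc : (N:ℂ) ≠ 0 := Nat.cast_ne_zero.mpr hN.ne'
  have hn1 : (n + 1 : ℂ) ≠ 0 := by
    intro h
    have : ((n + 1 : ℤ) : ℂ) = 0 := by push_cast; exact h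
    have : (n + 1 : ℤ) = 0 := by exact_mod_cast this
    omega
  apply circleIntegral.integral_eq_zero_of_hasDerivWithinAt
    (f := fun z => (N:ℂ)/(n+1) * (Complex.exp (z / N) - 1) ^ (n+1)) hρ.le
  intro z hz
  have hz0 : z ≠ 0 := by
    intro h; rw [mem_sphere_iff_norm, h] at hz; simp at hz; exact hρ.ne' hz.symm
  have hzabs : ‖z‖ = ρ := by simpa [Complex.dist_eq] using hz
  have hne : Complex.exp (z / N) ≠ 1 := by
    apply exp_ne_one' (div_ne_zero hz0 hNc)
    rw [norm_div, hzabs]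
    simpa using hρ'
  have h1 : HasDerivAt (fun z : ℂ => Complex.exp (z / N) - 1)
      (Complex.exp (z / N) * (1 / N)) z := (hasDerivAt_expdiv N z).sub_const 1
  have h2 := ((hasDerivAt_zpow (n+1) _ (Or.inl (sub_ne_zero.2 hne))).comp z h1).const_mul
    ((N:ℂ)/(n+1))
  apply HasDerivAt.hasDerivWithinAt
  refine h2.congr_deriv ?_
  have : n + 1 - 1 = n := by ring
  rw [this]
  push_cast
  field_simp



lemma integral_exp_inv {N : ℕ} (hN : 0 < N) {ρ : ℝ} (hρ : 0 < ρ)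
    (hρ' : ρ < 2 * Real.pi * N) :
    (∮ z in C(0, ρ), Complex.exp (z / N) * (Complex.exp (z / N) - 1)⁻¹)
      = 2 * Real.pi * Complex.I * N := by
  have hNc : (N:ℂ) ≠ 0 := Nat.cast_ne_zero.mpr hN.ne'
  set g : ℂ → ℂ := fun z => Complex.exp (z / N) - 1 with hg_def
  have hg_diff : Differentiable ℂ g := fun z => ((hasDerivAt_expdiv N z).sub_const 1).differentiableAt
  set D : ℂ → ℂ := dslope g 0 with hD_def
  have hD : Differentiable ℂ D := by
    rw [← differentiableOn_univ] at hg_diff ⊢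
    exact (Complex.differentiableOn_dslope univ_mem).mpr hg_diff
  have hzD : ∀ z : ℂ, z * D z = Complex.exp (z / N) - 1 := by
    intro z
    have := sub_smul_dslope g 0 z
    simp only [sub_zero, smul_eq_mul, hg_def] at this
    simpa using this
  have hD0 : D 0 = 1 / N := by
    rw [hD_def, dslope_same]
    rw [((hasDerivAt_expdiv N 0).sub_const 1).deriv]
    simp
  have hexpne : ∀ z : ℂ, z ≠ 0 → ‖z‖ < 2 * Real.pi * N →
      Complex.exp (z / N) ≠ 1 := by
    intro z hz0 hzlt
    apply exp_ne_one' (div_ne_zero hz0 hNc)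
    rw [norm_div]
    simp only [Complex.norm_natCast]
    rw [div_lt_iff₀ (by exact_mod_cast hN)]
    exact hzlt
  have hDne : ∀ z : ℂ, ‖z‖ < 2 * Real.pi * N → D z ≠ 0 := by
    intro z hzlt
    rcases eq_or_ne z 0 with rfl | hz0
    · rw [hD0]; simp [hNc]
    · intro h
      have := hzD z
      rw [h, mul_zero] at this
      exact (sub_ne_zero.2 (hexpne z hz0 hzlt)) this.symm
  set A : ℂ → ℂ := fun z => z * Complex.exp (z / N) - N * (Complex.exp (z / N) - 1) with hA_def
  have hA_deriv : ∀ z : ℂ, HasDerivAt A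
      (1 * Complex.exp (z / N) + z * (Complex.exp (z / N) * (1 / N))
        - (N:ℂ) * (Complex.exp (z / N) * (1 / N))) z := by
    intro z
    exact ((hasDerivAt_id z).mul (hasDerivAt_expdiv N z)).sub
      (((hasDerivAt_expdiv N z).sub_const 1).const_mul (N:ℂ))
  have hA_diff : Differentiable ℂ A := fun z => (hA_deriv z).differentiableAt
  set A₁ : ℂ → ℂ := dslope A 0 with hA1_def
  set A₂ : ℂ → ℂ := dslope A₁ 0 with hA2_def
  have hA1 : Differentiable ℂ A₁ := by
    rw [← differentiableOn_univ] at hA_diff ⊢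
    exact (Complex.differentiableOn_dslope univ_mem).mpr hA_diff
  have hA2 : Differentiable ℂ A₂ := by
    rw [← differentiableOn_univ] at hA1 ⊢
    exact (Complex.differentiableOn_dslope univ_mem).mpr hA1
  have hA0 : A 0 = 0 := by simp [hA_def]
  have hA10 : A₁ 0 = 0 := by
    rw [hA1_def, dslope_same, (hA_deriv 0).deriv]
    simp [hNc]
  have hAz : ∀ z : ℂ, A z = z ^ 2 * A₂ z := by
    intro z
    have e1 := sub_smul_dslope A 0 z
    have e2 := sub_smul_dslope A₁ 0 z
    simp only [sub_zero, smul_eq_mul, hA0, hA10] at e1 e2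
    rw [← hA1_def] at e1
    rw [← hA2_def] at e2
    rw [← e1, ← e2]
    ring
  have key : Set.EqOn (fun z => Complex.exp (z / N) * (Complex.exp (z / N) - 1)⁻¹)
      (fun z => (N:ℂ) * z⁻¹ + A₂ z * (D z)⁻¹) (sphere (0:ℂ) ρ) := by
    intro z hz
    have hzabs : ‖z‖ = ρ := by simpa [Complex.dist_eq] using hz
    have hz0 : z ≠ 0 := by
      intro h; rw [h] at hzabs; simp at hzabs; exact hρ.ne' hzabs.symm
    have hzlt : ‖z‖ < 2 * Real.pi * N := by rw [hzabs]; exact hρ'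
    have hne : Complex.exp (z / N) ≠ 1 := hexpne z hz0 hzlt
    have hDz : D z ≠ 0 := hDne z hzlt
    have hE : Complex.exp (z / N) - 1 = z * D z := (hzD z).symm
    have hA2z : z * Complex.exp (z / N) - N * (Complex.exp (z / N) - 1) = z ^ 2 * A₂ z := hAz z
    have h5 : z * (Complex.exp (z / N) - (N:ℂ) * D z - z * A₂ z) = 0 := by
      linear_combination hA2z + (N:ℂ) * hE
    have h6 : Complex.exp (z / N) = (N:ℂ) * D z + z * A₂ z := by
      have := (mul_eq_zero.mp h5).resolve_left hz0
      linear_combination this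
    simp only
    rw [hE, h6]
    field_simp
  rw [circleIntegral.integral_congr hρ.le key]
  have hi1 : CircleIntegrable (fun z : ℂ => (N:ℂ) * z⁻¹) 0 ρ := by
    apply ContinuousOn.circleIntegrable hρ.le
    apply ContinuousOn.mul continuousOn_const
    apply ContinuousOn.inv₀ continuousOn_id
    intro z hz
    have hzabs : ‖z‖ = ρ := by simpa [Complex.dist_eq] using hz
    simp only [id]
    intro h; rw [h] at hzabs; simp at hzabs; exact hρ.ne' hzabs.symm
  have hi2 : CircleIntegrable (fun z : ℂ => A₂ z * (D z)⁻¹) 0 ρ := by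
    apply ContinuousOn.circleIntegrable hρ.le
    apply ContinuousOn.mul hA2.continuous.continuousOn
    apply ContinuousOn.inv₀ hD.continuous.continuousOn
    intro z hz
    have hzabs : ‖z‖ = ρ := by simpa [Complex.dist_eq] using hz
    exact hDne z (by rw [hzabs]; exact hρ')
  rw [circleIntegral_add' hi1 hi2]
  have e1 : (∮ z in C(0, ρ), (N:ℂ) * z⁻¹) = (N:ℂ) * (2 * Real.pi * Complex.I) := by
    rw [circleIntegral.integral_const_mul]
    have := circleIntegral.integral_sub_inv_of_mem_ball (c := (0:ℂ)) (w := 0) (R := ρ)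
      (mem_ball_self hρ)
    simp only [sub_zero] at this
    rw [this]
  have e2 : (∮ z in C(0, ρ), A₂ z * (D z)⁻¹) = 0 := by
    apply Complex.circleIntegral_eq_zero_of_differentiable_on_off_countable hρ.le
      (countable_empty)
    · intro z hz
      have : ‖z‖ ≤ ρ := by simpa [Complex.dist_eq] using hz
      exact ((hA2 z).mul ((hD z).inv (hDne z (lt_of_le_of_lt this hρ')))).continuousAt.continuousWithinAt
    · intro z hz
      have : ‖z‖ < ρ := by simpa [Complex.dist_eq] using hz.1
      exact (hA2 z).mul ((hD z).inv (hDne z (lt_trans this hρ')))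
  rw [e1, e2]
  ring

lemma dslope_iter_diff {Q : ℂ → ℂ} {δ : ℝ} (hδ : 0 < δ)
    (hQ : DifferentiableOn ℂ Q (ball 1 δ)) (k : ℕ) :
    DifferentiableOn ℂ ((fun f => dslope f (1:ℂ))^[k] Q) (ball 1 δ) := by
  induction k with
  | zero => exact hQ
  | succ n ih =>
    rw [Function.iterate_succ_apply']
    exact (Complex.differentiableOn_dslope (ball_mem_nhds _ hδ)).mpr ih

lemma expand_iterate (Q : ℂ → ℂ) (p : ℕ) (x : ℂ) :
    Q x = (∑ k ∈ Finset.range p, ((fun f => dslope f (1:ℂ))^[k] Q 1) * (x - 1) ^ k)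
      + (x - 1) ^ p * ((fun f => dslope f (1:ℂ))^[p] Q x) := by
  induction p with
  | zero => simp
  | succ n ih =>
    rw [ih, Finset.sum_range_succ]
    have h := sub_smul_dslope ((fun f => dslope f (1:ℂ))^[n] Q) 1 x
    rw [smul_eq_mul] at h
    rw [Function.iterate_succ_apply']
    set T := (fun f => dslope f (1:ℂ))^[n] Q
    have : T x = T 1 + (x - 1) * dslope T 1 x := by linear_combination -h
    rw [this]
    ring

lemma key_expand {m : ℕ} {c : ℕ → ℂ} {T Qx x : ℂ} (hx : x - 1 ≠ 0)
    (main : Qx = (∑ k ∈ Finset.range m, c k * (x - 1) ^ k) + (x - 1) ^ m * T) :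
    ((x - 1) ^ m)⁻¹ * Qx = (∑ k ∈ Finset.range m, c k * (x - 1) ^ ((k : ℤ) - m)) + T := by
  have hxm : (x - 1) ^ m ≠ 0 := pow_ne_zero _ hx
  rw [main, mul_add, Finset.mul_sum, inv_mul_cancel_left₀ hxm]
  congr 1
  refine Finset.sum_congr rfl fun k hk => ?_
  rw [zpow_sub₀ hx, zpow_natCast, zpow_natCast]
  field_simp

lemma core_identity {N : ℕ} (hN : 1 ≤ N) (x : ℂ) :
    ∏ j ∈ Finset.Icc 1 N, (1 - x ^ j)⁻¹
      = (-1:ℂ)^N * (((x - 1)^N)⁻¹ * (∏ j ∈ Finset.Icc 1 N, (∑ i ∈ Finset.range j, x ^ i))⁻¹) := by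
  have h1 : ∀ j ∈ Finset.Icc 1 N, (1 - x ^ j)⁻¹ = (1-x)⁻¹ * (∑ i ∈ Finset.range j, x ^ i)⁻¹ := by
    intro j hj
    rw [show (1 - x ^ j) = (1 - x) * ∑ i ∈ Finset.range j, x ^ i by
      linear_combination geom_sum_mul x j, mul_inv]
  rw [Finset.prod_congr rfl h1, Finset.prod_mul_distrib, Finset.prod_const, Nat.card_Icc,
    ← Finset.prod_inv_distrib]
  have h2 : ((1 - x)⁻¹)^(N + 1 - 1) = (-1:ℂ)^N * ((x - 1)^N)⁻¹ := by
    rw [show (1 - x) = -(x - 1) by ring, ← neg_inv, neg_pow, inv_pow]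
    simp
  rw [h2]
  ring

lemma cancel_pow {x : ℂ} (hx : x - 1 ≠ 0) {l m N : ℕ} (h : l - 1 + m = N) :
    (x - 1)^(l - 1) * ((x - 1)^N)⁻¹ = ((x - 1)^m)⁻¹ := by
  rw [← h, pow_add, mul_inv, ← mul_assoc, mul_inv_cancel₀ (pow_ne_zero _ hx), one_mul]

/-- `F(z,N) = e^{z/N} · N^{l−1} · (1 − e^{z/N})^{l−1} · ∏_{j=1}^N (1 − e^{zj/N})^{−1}`. -/
noncomputable def Ffun (l N : ℕ) (z : ℂ) : ℂ :=
  Complex.exp (z / N) * (N : ℂ) ^ (l - 1) * (1 - Complex.exp (z / N)) ^ (l - 1) *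
    ∏ j ∈ Finset.Icc 1 N, (1 - Complex.exp (z * j / N))⁻¹

/-- For sufficiently large `N`,
`C_{0,1,l}(N) = ((−1)^{l−1}/N^l) · (1/(2πi)) ∮_{|z|=5} F(z,N) dz`. -/
theorem coef_as_contour_integral (l : ℕ) (hl : 1 ≤ l)
    (Coef : ℕ → ℂ)
    (hCoef : ∀ N : ℕ, 1 ≤ N → ∃ r₀ > 0, ∀ r : ℝ, 0 < r → r < r₀ →
      Coef N = (2 * Real.pi * Complex.I)⁻¹ *
        ∮ x in C(1, r), (x - 1) ^ (l - 1) * ∏ j ∈ Finset.Icc 1 N, (1 - x ^ j)⁻¹) :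
    ∃ N₀ : ℕ, ∀ N : ℕ, N₀ ≤ N →
      Coef N = ((-1 : ℂ) ^ (l - 1) / (N : ℂ) ^ l) * (2 * Real.pi * Complex.I)⁻¹ *
        ∮ z in C(0, 5), Ffun l N z := by
  refine ⟨l, fun N hN => ?_⟩
  have hN1 : 1 ≤ N := le_trans hl hN
  have hN0 : 0 < N := hN1
  have hNc : (N:ℂ) ≠ 0 := Nat.cast_ne_zero.mpr hN0.ne'
  have hNr : (0:ℝ) < (N:ℝ) := by exact_mod_cast hN0
  have hNr1 : (1:ℝ) ≤ (N:ℝ) := by exact_mod_cast hN1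
  have hpi : (3:ℝ) < Real.pi := Real.pi_gt_three
  set m : ℕ := N + 1 - l with hm_def
  have hm1 : 1 ≤ m := by omega
  have hlmN : l - 1 + m = N := by omega
  -- the polynomial P and the radius δ on which it does not vanish
  set P : ℂ → ℂ := fun x => ∏ j ∈ Finset.Icc 1 N, (∑ i ∈ Finset.range j, x ^ i) with hP_def
  have hP_diff : Differentiable ℂ P :=
    Differentiable.fun_finsetProd fun j _ => Differentiable.fun_sum fun i _ => differentiable_pow i
  have hP1 : P (1:ℂ) ≠ 0 := by
    rw [hP_def]
    simp only [one_pow, Finset.sum_const, Finset.card_range, nsmul_eq_mul, mul_one]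
    rw [Finset.prod_ne_zero_iff]
    intro j hj
    have h1j : 1 ≤ j := (Finset.mem_Icc.mp hj).1
    exact Nat.cast_ne_zero.mpr (by omega)
  obtain ⟨δ, hδpos, hδ⟩ := Metric.eventually_nhds_iff.mp
    (hP_diff.continuous.continuousAt.eventually_ne hP1)
  have hPne : ∀ x : ℂ, dist x 1 < δ → P x ≠ 0 := fun x hx => hδ hx
  set Q : ℂ → ℂ := fun x => (P x)⁻¹ with hQ_def
  have hQ_diff : DifferentiableOn ℂ Q (ball 1 δ) :=
    DifferentiableOn.inv hP_diff.differentiableOn (fun x hx => hPne x (mem_ball.mp hx))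
  set Qk : ℕ → ℂ → ℂ := fun k => (fun f => dslope f (1:ℂ))^[k] Q with hQk_def
  set c : ℕ → ℂ := fun k => Qk k 1 with hc_def
  have hQk_diff : ∀ k, DifferentiableOn ℂ (Qk k) (ball 1 δ) := by
    intro k
    rw [hQk_def]
    exact dslope_iter_diff hδpos hQ_diff k
  have hexpand : ∀ x : ℂ, x - 1 ≠ 0 →
      ((x - 1)^m)⁻¹ * Q x = (∑ k ∈ Finset.range m, c k * (x - 1) ^ ((k:ℤ) - m)) + Qk m x := by
    intro x hx
    rw [hc_def, hQk_def]
    exact key_expand hx (expand_iterate Q m x)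
  -- ===================== x-side =====================
  obtain ⟨r₀, hr₀pos, hCoefr⟩ := hCoef N hN1
  set r : ℝ := min (r₀/2) (δ/2) with hr_def
  have hr_pos : 0 < r := lt_min (by linarith) (by linarith)
  have hrr₀ : r < r₀ := lt_of_le_of_lt (min_le_left _ _) (by linarith)
  have hrδ : r < δ := lt_of_le_of_lt (min_le_right _ _) (by linarith)
  have hCoefN := hCoefr r hr_pos hrr₀
  have hx_sphere : ∀ x : ℂ, x ∈ sphere (1:ℂ) r → x - 1 ≠ 0 ∧ dist x 1 < δ := by
    intro x hx
    have hdist : dist x 1 = r := mem_sphere.mp hx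
    constructor
    · rw [sub_ne_zero]
      intro h
      rw [h] at hdist
      simp at hdist
      exact hr_pos.ne' hdist.symm
    · rw [hdist]; exact hrδ
  have hg_eq : Set.EqOn (fun x => (x - 1) ^ (l - 1) * ∏ j ∈ Finset.Icc 1 N, (1 - x ^ j)⁻¹)
      (fun x => (-1:ℂ)^N * ((∑ k ∈ Finset.range m, c k * (x - 1) ^ ((k:ℤ) - m)) + Qk m x))
      (sphere (1:ℂ) r) := by
    intro x hx
    obtain ⟨hx1, hxδ⟩ := hx_sphere x hx
    simp only
    rw [core_identity hN1 x,
      show (∏ j ∈ Finset.Icc 1 N, ∑ i ∈ Finset.range j, x ^ i)⁻¹ = Q x from by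
        simp only [hQ_def, hP_def]]
    rw [show (x - 1)^(l-1) * ((-1:ℂ)^N * (((x - 1)^N)⁻¹ * Q x))
        = (-1:ℂ)^N * (((x - 1)^(l-1) * ((x - 1)^N)⁻¹) * Q x) from by ring]
    rw [cancel_pow hx1 hlmN]
    rw [hexpand x hx1]
  have hsum_int_x : ∀ k ∈ Finset.range m,
      CircleIntegrable (fun x : ℂ => c k * (x - 1) ^ ((k:ℤ) - m)) 1 r := by
    intro k _
    apply ContinuousOn.circleIntegrable hr_pos.le
    apply continuousOn_const.mul
    intro x hx
    exact ((differentiableAt_zpow.mpr (Or.inl (hx_sphere x hx).1)).comp x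
      (differentiableAt_id.sub_const 1)).continuousAt.continuousWithinAt
  have hsum_cont_x : ContinuousOn
      (fun x : ℂ => ∑ k ∈ Finset.range m, c k * (x - 1) ^ ((k:ℤ) - m)) (sphere 1 r) := by
    apply continuousOn_finset_sum
    intro k _
    apply continuousOn_const.mul
    intro x hx
    exact ((differentiableAt_zpow.mpr (Or.inl (hx_sphere x hx).1)).comp x
      (differentiableAt_id.sub_const 1)).continuousAt.continuousWithinAt
  have hQk_cont_x : ContinuousOn (Qk m) (sphere 1 r) := by
    apply ((hQk_diff m).continuousOn).mono
    intro x hx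
    exact mem_ball.mpr (hx_sphere x hx).2
  have hIx : (∮ x in C(1, r), (x - 1) ^ (l - 1) * ∏ j ∈ Finset.Icc 1 N, (1 - x ^ j)⁻¹)
      = (-1:ℂ)^N * (c (m-1) * (2 * Real.pi * Complex.I)) := by
    rw [circleIntegral.integral_congr hr_pos.le hg_eq]
    rw [circleIntegral.integral_const_mul]
    congr 1
    rw [circleIntegral_add' (hsum_cont_x.circleIntegrable hr_pos.le)
      (hQk_cont_x.circleIntegrable hr_pos.le)]
    rw [circleIntegral_finset_sum _ _ _ _ hsum_int_x]
    have hQkzero : (∮ x in C(1, r), Qk m x) = 0 := by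
      apply Complex.circleIntegral_eq_zero_of_differentiable_on_off_countable hr_pos.le
        countable_empty
      · apply ((hQk_diff m).continuousOn).mono
        intro x hx
        exact mem_ball.mpr (lt_of_le_of_lt (mem_closedBall.mp hx) hrδ)
      · intro x hx
        exact (hQk_diff m).differentiableAt (isOpen_ball.mem_nhds
          (mem_ball.mpr (lt_trans (mem_ball.mp hx.1) hrδ)))
    rw [hQkzero, add_zero]
    have hterm : ∀ k ∈ Finset.range m,
        (∮ x in C(1, r), c k * (x - 1) ^ ((k:ℤ) - m))
          = if k = m - 1 then c (m-1) * (2 * Real.pi * Complex.I) else 0 := by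
      intro k hk
      have hkm : k < m := Finset.mem_range.mp hk
      rw [circleIntegral.integral_const_mul]
      rcases eq_or_ne k (m-1) with rfl | hne
      · rw [if_pos rfl]
        rw [show ((m-1:ℕ):ℤ) - (m:ℤ) = -1 by omega]
        simp only [zpow_neg_one]
        rw [circleIntegral.integral_sub_inv_of_mem_ball (mem_ball_self hr_pos)]
      · rw [if_neg hne]
        rw [circleIntegral.integral_sub_zpow_of_ne (by omega : (k:ℤ) - (m:ℤ) ≠ -1), mul_zero]
    rw [Finset.sum_congr rfl hterm, Finset.sum_ite_eq' _ (m-1) _,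
      if_pos (Finset.mem_range.mpr (by omega))]
  have hCoefVal : Coef N = (-1:ℂ)^N * c (m - 1) := by
    rw [hCoefN, hIx]
    have h2 := Complex.two_pi_I_ne_zero
    field_simp
  -- ===================== z-side =====================
  set ρ : ℝ := min 1 (δ * N / 4) with hρ_def
  have hρpos : 0 < ρ := lt_min one_pos (by positivity)
  have hρ1 : ρ ≤ 1 := min_le_left _ _
  have hρδ4 : ρ ≤ δ * N / 4 := min_le_right _ _
  have hρN2π : ρ / N < 2 * Real.pi := by
    have : ρ / N ≤ 1 := by
      rw [div_le_one hNr]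
      exact le_trans hρ1 hNr1
    nlinarith
  have hρ2πN : ρ < 2 * Real.pi * N := by nlinarith
  have hmem_ball : ∀ z : ℂ, ‖z‖ ≤ ρ → dist (Complex.exp (z / N)) 1 < δ := by
    intro z hz
    have habs : ‖z / N‖ ≤ ρ / N := by
      rw [norm_div, Complex.norm_natCast]
      exact by gcongr
    have habs1 : ‖z / N‖ ≤ 1 := le_trans habs (by rw [div_le_one hNr]; linarith)
    have h2 : ‖Complex.exp (z/N) - 1‖ ≤ 2 * ‖z / N‖ :=
      Complex.norm_exp_sub_one_le habs1
    rw [Complex.dist_eq]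
    have hρN4 : ρ / N ≤ δ / 4 := by
      rw [div_le_div_iff₀ hNr (by norm_num : (0:ℝ) < 4)]
      linarith [hρδ4]
    calc ‖Complex.exp (z/N) - 1‖ ≤ 2 * ‖z / N‖ := h2
      _ ≤ 2 * (δ / 4) := by linarith [le_trans habs hρN4]
      _ < δ := by linarith
  have hexpne1 : ∀ z : ℂ, z ≠ 0 → ‖z‖ ≤ ρ → Complex.exp (z / N) ≠ 1 := by
    intro z hz0 hz
    apply exp_ne_one' (div_ne_zero hz0 hNc)
    rw [norm_div, Complex.norm_natCast]
    calc ‖z‖ / (N:ℝ) ≤ ρ / N := by gcongr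
      _ < 2 * Real.pi := hρN2π
  have hz_sphere : ∀ z : ℂ, z ∈ sphere (0:ℂ) ρ → ‖z‖ = ρ ∧ z ≠ 0 := by
    intro z hz
    have hzabs : ‖z‖ = ρ := by simpa [Complex.dist_eq] using hz
    refine ⟨hzabs, fun h => ?_⟩
    rw [h] at hzabs; simp at hzabs; exact hρpos.ne' hzabs.symm
  have hFfun_eq : Set.EqOn (Ffun l N)
      (fun z => ((-1:ℂ)^(N + l - 1) * (N:ℂ)^(l-1)) *
        ((∑ k ∈ Finset.range m,
            c k * (Complex.exp (z / N) * (Complex.exp (z / N) - 1) ^ ((k:ℤ) - m)))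
          + Complex.exp (z / N) * Qk m (Complex.exp (z / N)))) (sphere 0 ρ) := by
    intro z hz
    obtain ⟨hzabs, hz0⟩ := hz_sphere z hz
    have hxne1 : Complex.exp (z / N) ≠ 1 := hexpne1 z hz0 hzabs.le
    have hx1 : Complex.exp (z / N) - 1 ≠ 0 := sub_ne_zero.2 hxne1
    have hprod : ∏ j ∈ Finset.Icc 1 N, (1 - Complex.exp (z * j / N))⁻¹
        = ∏ j ∈ Finset.Icc 1 N, (1 - (Complex.exp (z / N)) ^ j)⁻¹ :=
      Finset.prod_congr rfl fun j _ => by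
        rw [show z * (j:ℕ) / (N:ℂ) = (j:ℕ) * (z / N) by push_cast; ring, Complex.exp_nat_mul]
    have hes : (∑ k ∈ Finset.range m,
          c k * (Complex.exp (z / N) * (Complex.exp (z / N) - 1) ^ ((k:ℤ) - m)))
        = Complex.exp (z / N) * ∑ k ∈ Finset.range m,
            c k * (Complex.exp (z / N) - 1) ^ ((k:ℤ) - m) := by
      rw [Finset.mul_sum]
      exact Finset.sum_congr rfl fun k _ => by ring
    have hcp := cancel_pow hx1 hlmN
    have hexp2 := hexpand (Complex.exp (z / N)) hx1
    have hsgn : (-1:ℂ)^(N + l - 1) = (-1:ℂ)^(l-1) * (-1:ℂ)^N := by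
      rw [← pow_add]; congr 1; omega
    simp only [Ffun]
    rw [hprod, core_identity hN1,
      show (∏ j ∈ Finset.Icc 1 N, ∑ i ∈ Finset.range j, (Complex.exp (z/N)) ^ i)⁻¹
          = Q (Complex.exp (z/N)) from by simp only [hQ_def, hP_def],
      show (1 - Complex.exp (z / N)) ^ (l - 1)
          = (-1:ℂ)^(l-1) * (Complex.exp (z / N) - 1)^(l-1) from by
        rw [show (1 - Complex.exp (z/N)) = -(Complex.exp (z/N) - 1) by ring, neg_pow],
      hes, hsgn,
      show Complex.exp (z / N) * (∑ k ∈ Finset.range m,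
            c k * (Complex.exp (z / N) - 1) ^ ((k:ℤ) - m))
          + Complex.exp (z / N) * Qk m (Complex.exp (z / N))
        = Complex.exp (z / N) * ((∑ k ∈ Finset.range m,
            c k * (Complex.exp (z / N) - 1) ^ ((k:ℤ) - m)) + Qk m (Complex.exp (z / N)))
        from by ring,
      ← hexp2, ← hcp]
    ring
  -- integrability and integrals on the small circle
  have hde : ∀ z : ℂ, DifferentiableAt ℂ (fun z : ℂ => Complex.exp (z / N)) z :=
    fun z => (hasDerivAt_expdiv N z).differentiableAt
  have hzterm_cont : ∀ (n : ℤ), ContinuousOn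
      (fun z : ℂ => Complex.exp (z / N) * (Complex.exp (z / N) - 1) ^ n) (sphere 0 ρ) := by
    intro n z hz
    obtain ⟨hzabs, hz0⟩ := hz_sphere z hz
    have hxne1 : Complex.exp (z / N) ≠ 1 := hexpne1 z hz0 hzabs.le
    exact ((hde z).mul ((differentiableAt_zpow.mpr
      (Or.inl (sub_ne_zero.2 hxne1))).comp z
      ((hde z).sub_const 1))).continuousAt.continuousWithinAt
  have hzint_sum : ∀ k ∈ Finset.range m, CircleIntegrable
      (fun z => c k * (Complex.exp (z / N) * (Complex.exp (z / N) - 1) ^ ((k:ℤ) - m))) 0 ρ := by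
    intro k _
    exact (continuousOn_const.mul (hzterm_cont ((k:ℤ) - m))).circleIntegrable hρpos.le
  have hzsum_cont : ContinuousOn (fun z : ℂ => ∑ k ∈ Finset.range m,
      c k * (Complex.exp (z / N) * (Complex.exp (z / N) - 1) ^ ((k:ℤ) - m))) (sphere 0 ρ) :=
    continuousOn_finset_sum _ fun k _ => continuousOn_const.mul (hzterm_cont ((k:ℤ) - m))
  have hT_diff : ∀ z : ℂ, ‖z‖ ≤ ρ →
      DifferentiableAt ℂ (fun z => Complex.exp (z / N) * Qk m (Complex.exp (z / N))) z := by
    intro z hz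
    have hmem : Complex.exp (z / N) ∈ ball (1:ℂ) δ := mem_ball.mpr (hmem_ball z hz)
    exact (hde z).mul (((hQk_diff m).differentiableAt
      (isOpen_ball.mem_nhds hmem)).comp z (hde z))
  have hT_cont : ContinuousOn
      (fun z => Complex.exp (z / N) * Qk m (Complex.exp (z / N))) (sphere 0 ρ) := by
    intro z hz
    exact (hT_diff z (hz_sphere z hz).1.le).continuousAt.continuousWithinAt
  have hTzero : (∮ z in C(0, ρ), Complex.exp (z / N) * Qk m (Complex.exp (z / N))) = 0 := by
    apply Complex.circleIntegral_eq_zero_of_differentiable_on_off_countable hρpos.le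
      countable_empty
    · intro z hz
      have : ‖z‖ ≤ ρ := by simpa [Complex.dist_eq] using hz
      exact (hT_diff z this).continuousAt.continuousWithinAt
    · intro z hz
      have : ‖z‖ < ρ := by simpa [Complex.dist_eq] using hz.1
      exact hT_diff z this.le
  have hIρ : (∮ z in C(0, ρ), Ffun l N z)
      = ((-1:ℂ)^(N + l - 1) * (N:ℂ)^(l - 1)) *
          (c (m - 1) * (2 * Real.pi * Complex.I * N)) := by
    rw [circleIntegral.integral_congr hρpos.le hFfun_eq]
    rw [circleIntegral.integral_const_mul]
    congr 1
    rw [circleIntegral_add' (hzsum_cont.circleIntegrable hρpos.le)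
      (hT_cont.circleIntegrable hρpos.le)]
    rw [circleIntegral_finset_sum _ _ _ _ hzint_sum]
    rw [hTzero, add_zero]
    have hterm : ∀ k ∈ Finset.range m,
        (∮ z in C(0, ρ), c k * (Complex.exp (z / N) * (Complex.exp (z / N) - 1) ^ ((k:ℤ) - m)))
          = if k = m - 1 then c (m-1) * (2 * Real.pi * Complex.I * N) else 0 := by
      intro k hk
      have hkm : k < m := Finset.mem_range.mp hk
      rw [circleIntegral.integral_const_mul]
      rcases eq_or_ne k (m-1) with rfl | hne
      · rw [if_pos rfl]
        rw [show ((m-1:ℕ):ℤ) - (m:ℤ) = -1 by omega]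
        simp only [zpow_neg_one]
        rw [integral_exp_inv hN0 hρpos hρ2πN]
      · rw [if_neg hne]
        rw [integral_exp_zpow_eq_zero hN0 hρpos hρN2π (by omega : (k:ℤ) - (m:ℤ) ≤ -2), mul_zero]
    rw [Finset.sum_congr rfl hterm, Finset.sum_ite_eq' _ (m-1) _,
      if_pos (Finset.mem_range.mpr (by omega))]
  -- annulus: move the big circle to the small circle
  have hFd : ∀ z : ℂ, z ≠ 0 → ‖z‖ ≤ 5 → DifferentiableAt ℂ (Ffun l N) z := by
    intro z hz0 hz5
    have hprodd : DifferentiableAt ℂ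
        (fun z : ℂ => ∏ j ∈ Finset.Icc 1 N, (1 - Complex.exp (z * j / N))⁻¹) z := by
      apply DifferentiableAt.fun_finsetProd
      intro j hj
      obtain ⟨hj1, hjN⟩ := Finset.mem_Icc.mp hj
      have hjr : (1:ℝ) ≤ (j:ℝ) := by exact_mod_cast hj1
      have hjN' : (j:ℝ) ≤ (N:ℝ) := by exact_mod_cast hjN
      have hzj0 : z * (j:ℕ) / (N:ℂ) ≠ 0 :=
        div_ne_zero (mul_ne_zero hz0 (Nat.cast_ne_zero.mpr (by omega))) hNc
      have hzjabs : ‖z * (j:ℕ) / (N:ℂ)‖ < 2 * Real.pi := by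
        simp only [norm_div, norm_mul, Complex.norm_natCast]
        rw [div_lt_iff₀ hNr]
        nlinarith [norm_nonneg z]
      have hne : (1:ℂ) - Complex.exp (z * (j:ℕ) / N) ≠ 0 :=
        sub_ne_zero.2 (Ne.symm (exp_ne_one' hzj0 hzjabs))
      have hdj : DifferentiableAt ℂ (fun z : ℂ => Complex.exp (z * (j:ℕ) / N)) z :=
        ((differentiableAt_id.mul_const ((j:ℕ):ℂ)).div_const _).cexp
      exact ((differentiableAt_const 1).sub hdj).inv hne
    exact (((hde z).mul (differentiableAt_const _)).mul
      (((differentiableAt_const 1).sub (hde z)).pow _)).mul hprodd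
  have hann : (∮ z in C(0, (5:ℝ)), Ffun l N z) = ∮ z in C(0, ρ), Ffun l N z := by
    apply Complex.circleIntegral_eq_of_differentiable_on_annulus_off_countable hρpos
      (le_trans hρ1 (by norm_num)) countable_empty
    · intro z hz
      obtain ⟨hz5, hzρ⟩ := hz
      have h1 : ‖z‖ ≤ 5 := by simpa [Complex.dist_eq] using hz5
      have h2 : ρ ≤ ‖z‖ := by
        by_contra h
        exact hzρ (mem_ball.mpr (by simpa [Complex.dist_eq] using lt_of_not_ge h))
      have hz0 : z ≠ 0 := by
        intro h; rw [h] at h2; simp at h2; linarith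
      exact (hFd z hz0 h1).continuousAt.continuousWithinAt
    · rintro z ⟨⟨hz5, hzρ⟩, -⟩
      have h1 : ‖z‖ < 5 := by simpa [Complex.dist_eq] using hz5
      have h2 : ρ < ‖z‖ := by
        by_contra h
        exact hzρ (mem_closedBall.mpr (by simpa [Complex.dist_eq] using le_of_not_gt h))
      have hz0 : z ≠ 0 := by
        intro h; rw [h] at h2; simp at h2; linarith
      exact hFd z hz0 h1.le
  -- ===================== conclusion =====================
  rw [hCoefVal, hann, hIρ]
  have hNl : (N:ℂ)^l ≠ 0 := pow_ne_zero _ hNc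
  have e1 : (N:ℂ)^(l-1) * (N:ℂ) = (N:ℂ)^l := by
    rw [← pow_succ]; congr 1; omega
  have e2 : ((-1:ℂ))^(l-1) * (-1:ℂ)^(N+l-1) = (-1:ℂ)^N := by
    rw [← pow_add, show l - 1 + (N + l - 1) = N + 2*(l-1) by omega, pow_add, pow_mul]
    norm_num
  rw [show ((-1:ℂ)^(l-1) / (N:ℂ)^l) * (2 * (Real.pi:ℂ) * Complex.I)⁻¹ *
      (((-1:ℂ)^(N + l - 1) * (N:ℂ)^(l - 1)) *
        (c (m - 1) * (2 * (Real.pi:ℂ) * Complex.I * N)))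
      = ((-1:ℂ)^(l-1) * (-1:ℂ)^(N+l-1)) * (((N:ℂ)^(l-1) * (N:ℂ)) / (N:ℂ)^l) *
        ((2 * (Real.pi:ℂ) * Complex.I)⁻¹ * (2 * (Real.pi:ℂ) * Complex.I)) * c (m - 1)
    from by ring]
  rw [e1, e2, div_self hNl, inv_mul_cancel₀ Complex.two_pi_I_ne_zero]
  ring
end

section
/- For every complex z with Re z < 0 and every integer N ≥ 1: −∑_{j=1}^N Log(1 − e^{zj/N}) = ∑_{k=1}^∞ (1/k) · (1 − e^{kz})/(e^{−kz/N} − 1), where the series on the right converges absolutely and Log is the principal complex logarithm. -/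
set_option maxHeartbeats 1600000 in
open Complex Finset in
/-- For `Re z < 0` and `N ≥ 1`,
`−∑_{j=1}^N Log(1 − e^{zj/N}) = ∑_{k=1}^∞ (1/k)·(1 − e^{kz})/(e^{−kz/N} − 1)`,
with the right-hand series converging absolutely. -/
theorem log_prod_eq_series (z : ℂ) (hz : z.re < 0) (N : ℕ) (hN : 1 ≤ N) :
    Summable (fun k : ℕ =>
      ‖(1 / ((k : ℂ) + 1)) * (1 - Complex.exp (((k : ℂ) + 1) * z)) /
        (Complex.exp (-(((k : ℂ) + 1) * z) / N) - 1)‖) ∧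
    -∑ j ∈ Finset.Icc 1 N, Complex.log (1 - Complex.exp (z * j / N)) =
      ∑' k : ℕ, (1 / ((k : ℂ) + 1)) * (1 - Complex.exp (((k : ℂ) + 1) * z)) /
        (Complex.exp (-(((k : ℂ) + 1) * z) / N) - 1) := by
  have hNR : (0:ℝ) < N := by exact_mod_cast hN
  have hNC : (N:ℂ) ≠ 0 := by exact_mod_cast hNR.ne'
  set q : ℕ → ℂ := fun k => Complex.exp (((k:ℂ)+1) * z / N) with hq
  have hqnorm : ∀ k, ‖q k‖ = Real.exp (((k:ℝ)+1) * z.re / N) := by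
    intro k
    rw [hq]
    rw [Complex.norm_exp]
    congr 1
    simp [Complex.div_re, Complex.normSq, Complex.mul_re]
    field_simp
  have hqlt : ∀ k, ‖q k‖ < 1 := by
    intro k
    rw [hqnorm k, Real.exp_lt_one_iff]
    have hk : (0:ℝ) < (k:ℝ) + 1 := by positivity
    exact div_neg_of_neg_of_pos (mul_neg_of_pos_of_neg hk hz) hNR
  have hq1 : ∀ k, q k ≠ 1 := fun k h => by simpa [h] using hqlt k
  have hq0 : ∀ k, q k ≠ 0 := fun k => Complex.exp_ne_zero _
  -- the norm of the base points
  have hwnorm : ∀ j : ℕ, ‖Complex.exp (z * j / N)‖ = Real.exp (z.re * j / N) := by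
    intro j
    rw [Complex.norm_exp]
    congr 1
    simp [Complex.div_re, Complex.normSq, Complex.mul_re]
    field_simp
  set r : ℝ := Real.exp (z.re / N) with hr
  have hr0 : 0 ≤ r := Real.exp_nonneg _
  have hr1 : r < 1 := by
    rw [hr, Real.exp_lt_one_iff]
    exact div_neg_of_neg_of_pos hz hNR
  have hwle : ∀ j ∈ Finset.Icc 1 N, ‖Complex.exp (z * j / N)‖ ≤ r := by
    intro j hj
    rw [hwnorm, hr]
    apply Real.exp_le_exp.mpr
    have hj1 : (1:ℝ) ≤ j := by exact_mod_cast (Finset.mem_Icc.mp hj).1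
    rw [div_le_div_iff₀ hNR hNR]
    nlinarith [mul_nonneg (sub_nonneg.mpr hj1) hNR.le]
  have hwlt : ∀ j ∈ Finset.Icc 1 N, ‖Complex.exp (z * j / N)‖ < 1 :=
    fun j hj => lt_of_le_of_lt (hwle j hj) hr1
  -- per-term identity
  have hterm : ∀ k : ℕ,
      (∑ j ∈ Finset.Icc 1 N, Complex.exp (z * j / N) ^ (k+1) / (((k+1 : ℕ)) : ℂ)) =
      (1 / ((k : ℂ) + 1)) * (1 - Complex.exp (((k : ℂ) + 1) * z)) /
        (Complex.exp (-(((k : ℂ) + 1) * z) / N) - 1) := by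
    intro k
    have hpow : ∀ j : ℕ, Complex.exp (z * j / N) ^ (k+1) = q k ^ j := by
      intro j
      rw [← Complex.exp_nat_mul, hq, ← Complex.exp_nat_mul]
      congr 1
      push_cast
      ring
    have hgeom : (∑ j ∈ Finset.Icc 1 N, q k ^ j) = q k * (q k ^ N - 1) / (q k - 1) := by
      rw [← Finset.Ico_add_one_right_eq_Icc, Finset.sum_Ico_eq_sum_range]
      show (∑ j ∈ Finset.range N, q k ^ (1 + j)) = _
      calc (∑ j ∈ Finset.range N, q k ^ (1 + j))
          = ∑ j ∈ Finset.range N, q k * q k ^ j := by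
            refine Finset.sum_congr rfl fun j _ => ?_
            rw [pow_add, pow_one]
        _ = q k * ∑ j ∈ Finset.range N, q k ^ j := by rw [Finset.mul_sum]
        _ = q k * ((q k ^ N - 1) / (q k - 1)) := by rw [geom_sum_eq (hq1 k)]
        _ = q k * (q k ^ N - 1) / (q k - 1) := by ring
    have hqN : q k ^ N = Complex.exp (((k:ℂ)+1) * z) := by
      rw [hq, ← Complex.exp_nat_mul]
      congr 1
      field_simp
    have hinv : Complex.exp (-(((k : ℂ) + 1) * z) / N) = (q k)⁻¹ := by
      rw [hq, ← Complex.exp_neg]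
      congr 1
      ring
    have hk0 : ((k:ℂ) + 1) ≠ 0 := Nat.cast_add_one_ne_zero k
    have hne1 : q k - 1 ≠ 0 := sub_ne_zero.mpr (hq1 k)
    have hinvne : (q k)⁻¹ - 1 ≠ 0 := by
      rw [sub_ne_zero, Ne, inv_eq_one]
      exact hq1 k
    have h1q : (1:ℂ) - q k ≠ 0 := sub_ne_zero.mpr (Ne.symm (hq1 k))
    have hiv : (q k)⁻¹ - 1 = (1 - q k) / q k := by
      rw [sub_div, div_self (hq0 k), one_div]
    simp only [hpow]
    rw [← Finset.sum_div, hgeom, hqN, hinv, hiv]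
    push_cast
    rw [div_div, div_div_eq_mul_div, div_eq_div_iff (mul_ne_zero hne1 hk0) h1q]
    field_simp
    ring
  -- summability
  have hsummable : Summable (fun k : ℕ =>
      ‖(1 / ((k : ℂ) + 1)) * (1 - Complex.exp (((k : ℂ) + 1) * z)) /
        (Complex.exp (-(((k : ℂ) + 1) * z) / N) - 1)‖) := by
    apply Summable.of_nonneg_of_le (f := fun k => (N : ℝ) * r ^ (k+1))
      (fun k => norm_nonneg _)
    · intro k
      rw [← hterm k]
      calc ‖∑ j ∈ Finset.Icc 1 N, Complex.exp (z * j / N) ^ (k+1) / (((k+1:ℕ)):ℂ)‖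
          ≤ ∑ j ∈ Finset.Icc 1 N, ‖Complex.exp (z * j / N) ^ (k+1) / (((k+1:ℕ)):ℂ)‖ :=
            norm_sum_le _ _
        _ ≤ ∑ j ∈ Finset.Icc 1 N, r ^ (k+1) := by
            refine Finset.sum_le_sum fun j hj => ?_
            rw [norm_div, norm_pow]
            have h1 : ‖(((k+1:ℕ)):ℂ)‖ = ((k:ℝ)+1) := by
              rw [Complex.norm_natCast]; push_cast; ring
            rw [h1]
            have hb : ‖Complex.exp (z * j / N)‖ ^ (k+1) ≤ r ^ (k+1) :=
              pow_le_pow_left₀ (norm_nonneg _) (hwle j hj) _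
            have hk1 : (1:ℝ) ≤ (k:ℝ) + 1 := by
              have := Nat.cast_nonneg (α := ℝ) k
              linarith
            calc ‖Complex.exp (z * j / N)‖ ^ (k+1) / ((k:ℝ)+1)
                ≤ ‖Complex.exp (z * j / N)‖ ^ (k+1) / 1 := by
                  apply div_le_div_of_nonneg_left (by positivity) one_pos hk1
              _ = ‖Complex.exp (z * j / N)‖ ^ (k+1) := by ring
              _ ≤ r ^ (k+1) := hb
        _ = (N:ℝ) * r ^ (k+1) := by
            rw [Finset.sum_const, Nat.card_Icc, Nat.add_sub_cancel, nsmul_eq_mul]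
    · have : Summable (fun k : ℕ => r ^ k) := summable_geometric_of_lt_one hr0 hr1
      have h2 : Summable (fun k : ℕ => r ^ (k+1)) := by
        simpa [pow_succ] using this.mul_right r
      exact h2.mul_left _
  refine ⟨hsummable, ?_⟩
  -- per-j HasSum
  have hjsum : ∀ j ∈ Finset.Icc 1 N,
      HasSum (fun n : ℕ => Complex.exp (z * j / N) ^ n / n)
        (-Complex.log (1 - Complex.exp (z * j / N))) :=
    fun j hj => Complex.hasSum_taylorSeries_neg_log (hwlt j hj)
  have hsum : HasSum (fun n : ℕ => ∑ j ∈ Finset.Icc 1 N, Complex.exp (z * j / N) ^ n / n)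
      (∑ j ∈ Finset.Icc 1 N, -Complex.log (1 - Complex.exp (z * j / N))) :=
    hasSum_sum hjsum
  have hshift : HasSum (fun k : ℕ => ∑ j ∈ Finset.Icc 1 N,
        Complex.exp (z * j / N) ^ (k+1) / (((k+1:ℕ)):ℂ))
      (∑ j ∈ Finset.Icc 1 N, -Complex.log (1 - Complex.exp (z * j / N))) := by
    have h0 : (∑ j ∈ Finset.Icc 1 N, Complex.exp (z * j / N) ^ 0 / ((0:ℕ):ℂ)) = 0 := by
      simp
    have := (hasSum_nat_add_iff' (f := fun n : ℕ => ∑ j ∈ Finset.Icc 1 N,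
        Complex.exp (z * j / N) ^ n / (n:ℂ)) 1).mpr hsum
    simpa [h0] using this
  rw [← Finset.sum_neg_distrib]
  have := hshift.tsum_eq
  rw [← this]
  exact tsum_congr fun k => (hterm k)
end

section
/- For every complex s with Re s < −1 and every complex w with Re w < 0, the integral ∫_0^∞ x^{s−1}/(e^{−w/x} − 1) dx converges absolutely and equals (−w)^s · Γ(−s) · ζ(−s), where (−w)^s is the principal power, Γ is the Gamma function and ζ is the Riemann zeta function. -/
open MeasureTheory Set Filter Complex
open scoped Topology Real

namespace MellinBoseAux

/-- Continuity-based measurability helper. -/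
lemma aesm (c z : ℂ) :
    AEStronglyMeasurable (fun t : ℝ => (t : ℂ) ^ c * Complex.exp (-(z * t)))
      (volume.restrict (Ioi 0)) := by
  refine ContinuousOn.aestronglyMeasurable ?_ measurableSet_Ioi
  refine ContinuousOn.mul ?_ ?_
  · refine continuousOn_of_forall_continuousAt fun x hx => ?_
    exact (continuousAt_cpow_const (Complex.ofReal_mem_slitPlane.2 hx)).comp
      Complex.continuous_ofReal.continuousAt
  · exact (Complex.continuous_exp.comp (by continuity)).continuousOn

lemma norm_aux {a z : ℂ} {t : ℝ} (ht : 0 < t) :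
    ‖(t : ℂ) ^ (a - 1) * Complex.exp (-(z * t))‖
      = t ^ (a.re - 1) * Real.exp (-(z.re * t)) := by
  rw [norm_mul, Complex.norm_cpow_eq_rpow_re_of_pos ht, Complex.norm_exp]
  have h1 : (a - 1).re = a.re - 1 := by simp
  have h2 : (-(z * (t : ℂ))).re = -(z.re * t) := by
    simp [Complex.mul_re]
  rw [h1, h2]

lemma realInt {p : ℝ} (hp : 0 < p) {c : ℝ} (hc : 0 < c) :
    IntegrableOn (fun t : ℝ => t ^ (p - 1) * Real.exp (-(c * t))) (Ioi 0) := by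
  have h := Real.GammaIntegral_convergent hp
  rw [← mul_zero c, ← integrableOn_Ioi_comp_mul_left_iff _ _ hc] at h
  have h2 : IntegrableOn
      (fun t : ℝ => (c ^ (p - 1))⁻¹ * (Real.exp (-(c * t)) * (c * t) ^ (p - 1))) (Ioi 0) :=
    h.const_mul _
  refine h2.congr_fun (fun t ht => ?_) measurableSet_Ioi
  have ht' : (0:ℝ) < t := ht
  have hcp : (c:ℝ) ^ (p - 1) ≠ 0 := (Real.rpow_pos_of_pos hc _).ne'
  beta_reduce
  rw [Real.mul_rpow hc.le ht'.le]
  field_simp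

lemma intOn {a : ℂ} (ha : 0 < a.re) {z : ℂ} (hz : 0 < z.re) :
    IntegrableOn (fun t : ℝ => (t : ℂ) ^ (a - 1) * Complex.exp (-(z * t))) (Ioi 0) := by
  refine Integrable.mono' (realInt ha hz) (aesm _ _) ?_
  rw [ae_restrict_iff' measurableSet_Ioi]
  filter_upwards with t ht
  rw [norm_aux ht]

/-- The Gamma integral with complex scale parameter, via analytic continuation from the
real case. -/
lemma integral_eq {a : ℂ} (ha : 0 < a.re) {z : ℂ} (hz : 0 < z.re) :
    ∫ t : ℝ in Ioi 0, (t : ℂ) ^ (a - 1) * Complex.exp (-(z * t))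
      = z ^ (-a) * Complex.Gamma a := by
  set U : Set ℂ := {z : ℂ | 0 < z.re} with hUdef
  set f : ℂ → ℂ := fun z => ∫ t : ℝ in Ioi 0, (t : ℂ) ^ (a - 1) * Complex.exp (-(z * t))
    with hfdef
  set g : ℂ → ℂ := fun z => (z⁻¹) ^ a * Complex.Gamma a with hgdef
  have hUopen : IsOpen U := isOpen_lt continuous_const Complex.continuous_re
  have hf : DifferentiableOn ℂ f U := by
    intro z₀ hz₀
    have hz₀' : 0 < z₀.re := hz₀
    set ε : ℝ := z₀.re / 2 with hε
    have hε0 : 0 < ε := by positivity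
    have key := hasDerivAt_integral_of_dominated_loc_of_deriv_le (μ := volume.restrict (Ioi 0))
      (F := fun z (t : ℝ) => (t : ℂ) ^ (a - 1) * Complex.exp (-(z * t)))
      (F' := fun z (t : ℝ) => -(t : ℂ) * ((t : ℂ) ^ (a - 1) * Complex.exp (-(z * t))))
      (x₀ := z₀) (bound := fun t : ℝ => t ^ ((a.re + 1) - 1) * Real.exp (-(ε * t)))
      (Metric.ball_mem_nhds z₀ hε0) ?_ ?_ ?_ ?_ ?_ ?_
    · exact (key.2.differentiableAt).differentiableWithinAt
    · filter_upwards with z using aesm _ _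
    · exact intOn ha hz₀'
    · exact (Complex.continuous_ofReal.aestronglyMeasurable.neg.mul (aesm (a - 1) z₀))
    · rw [ae_restrict_iff' measurableSet_Ioi]
      filter_upwards with t ht
      intro z hzb
      have hzre : ε < z.re := by
        have h1 : |(z - z₀).re| ≤ ‖z - z₀‖ := Complex.abs_re_le_norm _
        have h2 : ‖z - z₀‖ < ε := by
          simpa [Metric.mem_ball, Complex.dist_eq] using hzb
        have h3 := abs_lt.mp (lt_of_le_of_lt h1 h2)
        have h4 : -(ε) < z.re - z₀.re := by simpa [Complex.sub_re] using h3.1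
        simp only [hε] at h4 ⊢
        linarith
      have ht' : (0:ℝ) < t := ht
      rw [norm_mul, norm_neg, Complex.norm_real, Real.norm_eq_abs,
        abs_of_pos ht', norm_aux ht']
      have h1 : t * (t ^ (a.re - 1) * Real.exp (-(z.re * t)))
          = t ^ ((a.re + 1) - 1) * Real.exp (-(z.re * t)) := by
        rw [add_sub_cancel_right, show a.re = (a.re - 1) + 1 by ring,
          Real.rpow_add ht', Real.rpow_one]
        ring_nf
      rw [h1]
      have h2 : Real.exp (-(z.re * t)) ≤ Real.exp (-(ε * t)) := by
        apply Real.exp_le_exp.mpr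
        nlinarith
      exact mul_le_mul_of_nonneg_left h2 (Real.rpow_pos_of_pos ht' _).le
    · exact realInt (by positivity) hε0
    · rw [ae_restrict_iff' measurableSet_Ioi]
      filter_upwards with t ht
      intro z hzb
      have h1 : HasDerivAt (fun z : ℂ => -(z * (t:ℂ))) (-(t:ℂ)) z := by
        simpa using ((hasDerivAt_id z).mul_const (t:ℂ)).fun_neg
      have h3 := h1.cexp.const_mul ((t : ℂ) ^ (a - 1))
      rw [show -(t:ℂ) * ((t:ℂ) ^ (a - 1) * Complex.exp (-(z * t)))
          = (t:ℂ) ^ (a - 1) * (Complex.exp (-(z * t)) * -t) by ring]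
      exact h3
  have hg : DifferentiableOn ℂ g U := by
    intro z hz
    have hz' : 0 < z.re := hz
    have hzne : z ≠ 0 := fun h => by simp [h] at hz'
    have h1 : HasDerivAt (fun z : ℂ => z⁻¹) (-(z ^ 2)⁻¹) z := hasDerivAt_inv hzne
    have hslit : z⁻¹ ∈ Complex.slitPlane := by
      refine Complex.mem_slitPlane_iff.2 (Or.inl ?_)
      rw [Complex.inv_re]
      exact div_pos hz' (Complex.normSq_pos.2 hzne)
    exact (((h1.cpow_const hslit).differentiableAt).mul_const _).differentiableWithinAt
  have heq : Set.EqOn f g U := by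
    refine AnalyticOnNhd.eqOn_of_preconnected_of_frequently_eq
      (hf.analyticOnNhd hUopen) (hg.analyticOnNhd hUopen)
      ((convex_halfSpace_re_gt 0).isPreconnected) (z₀ := 1) (by simp [hUdef]) ?_
    have hseq : Tendsto (fun n : ℕ => ((1 + 1 / (n + 1) : ℝ) : ℂ)) atTop (𝓝[≠] (1 : ℂ)) := by
      rw [tendsto_nhdsWithin_iff]
      constructor
      · have h0 : Tendsto (fun n : ℕ => (1 + 1 / (n + 1) : ℝ)) atTop (𝓝 1) := by
          have := tendsto_one_div_add_atTop_nhds_zero_nat (𝕜 := ℝ)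
          simpa using (tendsto_const_nhds (x := (1:ℝ))).add this
        have h0' := (Complex.continuous_ofReal.tendsto 1).comp h0
        simpa [Function.comp_def] using h0'
      · filter_upwards with n
        simp only [mem_compl_iff, mem_singleton_iff]
        intro h
        have h' : (1 + 1 / (n + 1 : ℝ)) = 1 := by exact_mod_cast h
        have hn : (0:ℝ) < 1 / (n + 1) := by positivity
        linarith
    refine hseq.frequently (Frequently.of_forall fun n => ?_)
    set r : ℝ := 1 + 1 / (n + 1) with hr
    have hr0 : 0 < r := by positivity
    show f r = g r
    have h5 := integral_cpow_mul_exp_neg_mul_Ioi ha hr0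
    rw [hfdef, hgdef]
    simp only
    rw [h5]
    rw [one_div, ← Complex.ofReal_inv]
  have h6 := heq hz
  rw [hfdef, hgdef] at h6
  simp only at h6
  rw [h6, Complex.inv_cpow _ _ (by
      rw [Ne, Complex.arg_eq_pi_iff]
      rintro ⟨h1, -⟩
      exact absurd hz (by simp [hUdef]; linarith)), ← Complex.cpow_neg]

lemma exp_ne_one {z : ℂ} (hz : 0 < z.re) : Complex.exp z ≠ 1 := by
  intro h
  have h2 := congrArg (‖·‖) h
  rw [Complex.norm_exp, norm_one, Real.exp_eq_one_iff] at h2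
  exact hz.ne' h2

lemma ofReal_mul_cpow {r : ℝ} (hr : 0 < r) {x : ℂ} (hx : x ≠ 0) (c : ℂ) :
    ((r : ℂ) * x) ^ c = (r : ℂ) ^ c * x ^ c := by
  rw [Complex.cpow_def_of_ne_zero (mul_ne_zero (Complex.ofReal_ne_zero.mpr hr.ne') hx),
    Complex.cpow_def_of_ne_zero (Complex.ofReal_ne_zero.mpr hr.ne'),
    Complex.cpow_def_of_ne_zero hx, Complex.log_ofReal_mul hr hx, Complex.ofReal_log hr.le, add_mul, Complex.exp_add]

/-- The key computation: Mellin transform of the Bose function with complex scale. -/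
lemma key {σ : ℂ} (hσ : 1 < σ.re) {a : ℂ} (ha : 0 < a.re) :
    IntegrableOn (fun u : ℝ => (u : ℂ) ^ (σ - 1) * (1 / (Complex.exp (a * u) - 1))) (Ioi 0) ∧
    ∫ u : ℝ in Ioi 0, (u : ℂ) ^ (σ - 1) * (1 / (Complex.exp (a * u) - 1))
      = a ^ (-σ) * Complex.Gamma σ * riemannZeta σ := by
  have hσ0 : 0 < σ.re := by linarith
  have hane : a ≠ 0 := fun h => by simp [h] at ha
  set z : ℕ → ℂ := fun n => ((n : ℝ) + 1 : ℝ) * a with hz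
  have hzre : ∀ n : ℕ, (z n).re = ((n : ℝ) + 1) * a.re := by
    intro n; rw [hz]; exact Complex.re_ofReal_mul _ _
  have hzpos : ∀ n : ℕ, 0 < (z n).re := by
    intro n; rw [hzre]; positivity
  have hden : ∀ u : ℝ, 0 < u → Complex.exp (a * u) - 1 ≠ 0 := by
    intro u hu
    have hre : 0 < (a * u).re := by
      rw [Complex.mul_re]
      simp only [Complex.ofReal_re, Complex.ofReal_im, mul_zero, sub_zero]
      positivity
    exact sub_ne_zero.2 (exp_ne_one hre)
  have hgeo : ∀ u : ℝ, 0 < u →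
      HasSum (fun n : ℕ => (u : ℂ) ^ (σ - 1) * Complex.exp (-(z n * u)))
        ((u : ℂ) ^ (σ - 1) * (1 / (Complex.exp (a * u) - 1))) := by
    intro u hu
    set r : ℂ := Complex.exp (-(a * u)) with hrdef
    have hupos : 0 < (a * (u:ℂ)).re := by
      rw [Complex.mul_re]
      simp only [Complex.ofReal_re, Complex.ofReal_im, mul_zero, sub_zero]
      positivity
    have hru : ‖r‖ < 1 := by
      rw [hrdef, Complex.norm_exp, Real.exp_lt_one_iff]
      simpa using hupos
    have hg : HasSum (fun n : ℕ => r ^ n) (1 - r)⁻¹ := hasSum_geometric_of_norm_lt_one hru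
    have hg2 : HasSum (fun n : ℕ => r * r ^ n) (r * (1 - r)⁻¹) := hg.mul_left r
    have hterm : ∀ n : ℕ, r * r ^ n = Complex.exp (-(z n * u)) := by
      intro n
      rw [hrdef, ← Complex.exp_nat_mul, ← Complex.exp_add, hz]
      congr 1
      push_cast
      ring
    have h1r : (1 : ℂ) - r ≠ 0 := by
      intro h
      have : r = 1 := by linear_combination -h
      rw [this] at hru; simp at hru
    have hval : r * (1 - r)⁻¹ = 1 / (Complex.exp (a * u) - 1) := by
      have hrE : r * Complex.exp (a * u) = 1 := by
        rw [hrdef, ← Complex.exp_add]; simp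
      have hkey : r * (Complex.exp (a * u) - 1) = 1 - r := by
        rw [mul_sub, hrE, mul_one]
      rw [eq_div_iff (hden u hu)]
      calc r * (1 - r)⁻¹ * (Complex.exp (a * u) - 1)
          = (1 - r)⁻¹ * (r * (Complex.exp (a * u) - 1)) := by ring
        _ = (1 - r)⁻¹ * (1 - r) := by rw [hkey]
        _ = 1 := inv_mul_cancel₀ h1r
    rw [← hval]
    have h7 := hg2.mul_left ((u : ℂ) ^ (σ - 1))
    simpa only [hterm, mul_assoc] using h7
  -- integrability of each term
  have hint : ∀ n : ℕ, IntegrableOn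
      (fun u : ℝ => (u : ℂ) ^ (σ - 1) * Complex.exp (-(z n * u))) (Ioi 0) := by
    intro n
    have := hzpos n
    exact intOn hσ0 this
  -- summability of the integrals of norms
  have hnorm : ∀ n : ℕ, (∫ u : ℝ in Ioi 0, ‖(u : ℂ) ^ (σ - 1) * Complex.exp (-(z n * u))‖)
      = (1 / ((n : ℝ) + 1)) ^ σ.re * ((1 / a.re) ^ σ.re * Real.Gamma σ.re) := by
    intro n
    rw [setIntegral_congr_fun measurableSet_Ioi (fun u (hu : 0 < u) => norm_aux hu)]
    have h8 : 0 < (z n).re := hzpos n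
    have h9 := Real.integral_rpow_mul_exp_neg_mul_Ioi hσ0 h8
    rw [h9, hzre n]
    have hn1 : (0:ℝ) < (n : ℝ) + 1 := by positivity
    rw [show (1 : ℝ) / (((n:ℝ) + 1) * a.re) = (1 / ((n:ℝ)+1)) * (1 / a.re) by
        field_simp,
      Real.mul_rpow (by positivity) (by positivity)]
    ring
  have hbase : Summable (fun n : ℕ => 1 / ((n : ℝ) + 1) ^ σ.re) := by
    have h10 : Summable (fun n : ℕ => 1 / (n : ℝ) ^ σ.re) :=
      Real.summable_one_div_nat_rpow.mpr hσ
    have h11 := (summable_nat_add_iff 1).mpr h10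
    refine h11.congr fun n => ?_
    push_cast
    ring_nf
  have hsum : Summable (fun n : ℕ =>
      ∫ u : ℝ in Ioi 0, ‖(u : ℂ) ^ (σ - 1) * Complex.exp (-(z n * u))‖) := by
    simp only [hnorm]
    apply Summable.mul_right
    refine hbase.congr fun n => ?_
    rw [one_div, one_div, Real.inv_rpow (by positivity : (0:ℝ) ≤ (n:ℝ) + 1)]
  -- interchange sum and integral
  have hHS := hasSum_integral_of_summable_integral_norm (μ := volume.restrict (Ioi 0))
    (F := fun n (u : ℝ) => (u : ℂ) ^ (σ - 1) * Complex.exp (-(z n * u))) hint hsum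
  have hcongr : (∫ u : ℝ in Ioi 0,
        ∑' n : ℕ, (u : ℂ) ^ (σ - 1) * Complex.exp (-(z n * u)))
      = ∫ u : ℝ in Ioi 0, (u : ℂ) ^ (σ - 1) * (1 / (Complex.exp (a * u) - 1)) := by
    refine setIntegral_congr_fun measurableSet_Ioi fun u hu => ?_
    exact (hgeo u hu).tsum_eq
  rw [hcongr] at hHS
  -- value of each term integral
  have hterm_val : ∀ n : ℕ,
      (∫ u : ℝ in Ioi 0, (u : ℂ) ^ (σ - 1) * Complex.exp (-(z n * u)))
        = (((n : ℝ) + 1 : ℝ) : ℂ) ^ (-σ) * (a ^ (-σ) * Complex.Gamma σ) := by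
    intro n
    rw [integral_eq hσ0 (hzpos n), hz]
    have hn1 : (0:ℝ) < (n : ℝ) + 1 := by positivity
    rw [ofReal_mul_cpow hn1 hane]
    ring
  simp only [hterm_val] at hHS
  -- zeta value
  have hzeta : HasSum (fun n : ℕ => (((n : ℝ) + 1 : ℝ) : ℂ) ^ (-σ)) (riemannZeta σ) := by
    have hnormval : ∀ n : ℕ, ‖(((n : ℝ) + 1 : ℝ) : ℂ) ^ (-σ)‖ = 1 / ((n : ℝ) + 1) ^ σ.re := by
      intro n
      have hn1 : (0:ℝ) < (n : ℝ) + 1 := by positivity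
      rw [Complex.norm_cpow_eq_rpow_re_of_pos hn1, Complex.neg_re,
        Real.rpow_neg hn1.le, one_div]
    have hsummable : Summable (fun n : ℕ => (((n : ℝ) + 1 : ℝ) : ℂ) ^ (-σ)) := by
      apply Summable.of_norm
      exact hbase.congr fun n => (hnormval n).symm
    have htsum : (∑' n : ℕ, (((n : ℝ) + 1 : ℝ) : ℂ) ^ (-σ)) = riemannZeta σ := by
      rw [zeta_eq_tsum_one_div_nat_add_one_cpow hσ]
      refine tsum_congr fun n => ?_
      rw [Complex.cpow_neg, one_div]
      norm_num
    exact htsum ▸ hsummable.hasSum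
  -- integrability of the full function
  have hG_int : IntegrableOn
      (fun u : ℝ => (u : ℂ) ^ (σ - 1) * (1 / (Complex.exp (a * u) - 1))) (Ioi 0) := by
    set c : ℝ := a.re with hcdef
    have hc : 0 < c := ha
    have hmeas : AEStronglyMeasurable
        (fun u : ℝ => (u : ℂ) ^ (σ - 1) * (1 / (Complex.exp (a * u) - 1)))
        (volume.restrict (Ioi 0)) := by
      refine ContinuousOn.aestronglyMeasurable ?_ measurableSet_Ioi
      refine ContinuousOn.mul ?_ ?_
      · refine continuousOn_of_forall_continuousAt fun x hx => ?_
        exact (continuousAt_cpow_const (Complex.ofReal_mem_slitPlane.2 hx)).comp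
          Complex.continuous_ofReal.continuousAt
      · refine ContinuousOn.div continuousOn_const ?_ fun u hu => hden u hu
        exact ((Complex.continuous_exp.comp (by continuity)).sub continuous_const).continuousOn
    have hEnorm : ∀ u : ℝ, ‖Complex.exp (a * u)‖ = Real.exp (c * u) := by
      intro u
      rw [Complex.norm_exp]
      congr 1
      simp [Complex.mul_re, hcdef]
    have hexp_pos : ∀ u : ℝ, 0 < u → 0 < Real.exp (c * u) - 1 := by
      intro u hu
      have h15 := Real.add_one_le_exp (c * u)
      nlinarith [mul_pos hc hu]
    have hbound : ∀ u : ℝ, 0 < u →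
        ‖(u : ℂ) ^ (σ - 1) * (1 / (Complex.exp (a * u) - 1))‖
          ≤ u ^ (σ.re - 1) * (1 / (Real.exp (c * u) - 1)) := by
      intro u hu
      have hlow : Real.exp (c * u) - 1 ≤ ‖Complex.exp (a * u) - 1‖ := by
        have h16 := norm_sub_norm_le (Complex.exp (a * u)) 1
        rw [hEnorm u, norm_one] at h16
        linarith
      rw [norm_mul,
        Complex.norm_cpow_eq_rpow_re_of_pos hu, show (σ - 1).re = σ.re - 1 by simp,
        norm_div, norm_one]
      refine mul_le_mul_of_nonneg_left ?_ (Real.rpow_pos_of_pos hu _).le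
      exact one_div_le_one_div_of_le (hexp_pos u hu) hlow
    have hsplit : Ioc (0:ℝ) 1 ∪ Ioi 1 = Ioi (0:ℝ) := Ioc_union_Ioi_eq_Ioi zero_le_one
    rw [← hsplit]
    refine IntegrableOn.union ?_ ?_
    · -- near zero
      have hg1 : IntegrableOn (fun u : ℝ => c⁻¹ * u ^ (σ.re - 2)) (Ioc 0 1) := by
        have h17 : IntegrableOn (fun u : ℝ => u ^ (σ.re - 2)) (Ioo (0:ℝ) 1) :=
          (intervalIntegral.integrableOn_Ioo_rpow_iff one_pos).mpr (by linarith)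
        have h17' : IntegrableOn (fun u : ℝ => u ^ (σ.re - 2)) (Ioc (0:ℝ) 1) :=
          h17.congr_set_ae Ioo_ae_eq_Ioc.symm
        exact h17'.const_mul _
      refine Integrable.mono' hg1
        (hmeas.mono_measure (Measure.restrict_mono Ioc_subset_Ioi_self le_rfl)) ?_
      rw [ae_restrict_iff' measurableSet_Ioc]
      filter_upwards with u hu
      obtain ⟨hu0, hu1⟩ := hu
      refine (hbound u hu0).trans ?_
      have hcu : 0 < c * u := mul_pos hc hu0
      have h18 : c * u ≤ Real.exp (c * u) - 1 := by
        have := Real.add_one_le_exp (c * u); linarith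
      have h19 : 1 / (Real.exp (c * u) - 1) ≤ 1 / (c * u) :=
        one_div_le_one_div_of_le hcu h18
      calc u ^ (σ.re - 1) * (1 / (Real.exp (c * u) - 1))
          ≤ u ^ (σ.re - 1) * (1 / (c * u)) :=
            mul_le_mul_of_nonneg_left h19 (Real.rpow_pos_of_pos hu0 _).le
        _ = c⁻¹ * u ^ (σ.re - 2) := by
            have e1 : u ^ (σ.re - 2) * u = u ^ (σ.re - 1) := by
              rw [← Real.rpow_add_one hu0.ne']
              congr 1
              ring
            rw [← e1]
            field_simp
    · -- near infinity
      have hKpos : 0 < 1 - Real.exp (-c) := by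
        have h20 : Real.exp (-c) < 1 := Real.exp_lt_one_iff.mpr (by linarith)
        linarith
      have hg2 : IntegrableOn
          (fun u : ℝ => (1 - Real.exp (-c))⁻¹ * (u ^ (σ.re - 1) * Real.exp (-(c * u))))
          (Ioi 1) := by
        exact ((realInt hσ0 hc).mono_set (Ioi_subset_Ioi zero_le_one)).const_mul _
      refine Integrable.mono' hg2
        (hmeas.mono_measure (Measure.restrict_mono (Ioi_subset_Ioi zero_le_one) le_rfl)) ?_
      rw [ae_restrict_iff' measurableSet_Ioi]
      filter_upwards with u hu
      have hu1 : (1:ℝ) < u := hu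
      have hu0 : (0:ℝ) < u := lt_trans one_pos hu1
      refine (hbound u hu0).trans ?_
      have he1 : Real.exp (c * u) * (1 - Real.exp (-c)) ≤ Real.exp (c * u) - 1 := by
        have h21 : Real.exp (c * u) * Real.exp (-c) = Real.exp (c * u - c) := by
          rw [← Real.exp_add]; ring_nf
        have h22 : (1:ℝ) ≤ Real.exp (c * u - c) := Real.one_le_exp (by nlinarith)
        nlinarith
      have hpos1 : 0 < Real.exp (c * u) * (1 - Real.exp (-c)) :=
        mul_pos (Real.exp_pos _) hKpos
      have h23 : 1 / (Real.exp (c * u) - 1)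
          ≤ 1 / (Real.exp (c * u) * (1 - Real.exp (-c))) :=
        one_div_le_one_div_of_le hpos1 he1
      have h24 : 1 / (Real.exp (c * u) * (1 - Real.exp (-c)))
          = (1 - Real.exp (-c))⁻¹ * Real.exp (-(c * u)) := by
        rw [Real.exp_neg, one_div, mul_inv, mul_comm, Real.exp_neg]
      calc u ^ (σ.re - 1) * (1 / (Real.exp (c * u) - 1))
          ≤ u ^ (σ.re - 1) * (1 / (Real.exp (c * u) * (1 - Real.exp (-c)))) :=
            mul_le_mul_of_nonneg_left h23 (Real.rpow_pos_of_pos hu0 _).le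
        _ = (1 - Real.exp (-c))⁻¹ * (u ^ (σ.re - 1) * Real.exp (-(c * u))) := by
            rw [h24]; ring
  refine ⟨hG_int, ?_⟩
  have h13 := (hzeta.mul_right (a ^ (-σ) * Complex.Gamma σ)).unique hHS
  rw [← h13]
  ring

end MellinBoseAux

/-- For `Re s < −1` and `Re w < 0`, the integral `∫_0^∞ x^{s−1}/(e^{−w/x} − 1) dx`
converges absolutely and equals `(−w)^s · Γ(−s) · ζ(−s)` (principal powers). -/
theorem mellin_bose_integral (s w : ℂ) (hs : s.re < -1) (hw : w.re < 0) :
    MeasureTheory.IntegrableOn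
      (fun x : ℝ => (x : ℂ) ^ (s - 1) / (Complex.exp (-w / x) - 1)) (Set.Ioi 0) ∧
    ∫ x in Set.Ioi (0 : ℝ), (x : ℂ) ^ (s - 1) / (Complex.exp (-w / x) - 1) =
      (-w) ^ s * Complex.Gamma (-s) * riemannZeta (-s) := by
  classical
  have ha : 0 < (-w).re := by simp; linarith
  have hσ : 1 < (-s).re := by simp; linarith
  obtain ⟨hkey_int, hkey_val⟩ := MellinBoseAux.key hσ ha
  -- change of variables u = x⁻¹ via `mellin_comp_rpow`
  set G : ℝ → ℂ := fun u => 1 / (Complex.exp (-w * u) - 1) with hGdef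
  have hkey_int' : MellinConvergent G (-s) := by
    unfold MellinConvergent
    refine hkey_int.congr_fun (fun u hu => ?_) measurableSet_Ioi
    simp [hGdef, smul_eq_mul]
  have hcomp : ∀ x : ℝ, x ∈ Ioi (0:ℝ) →
      ((x : ℂ) ^ (s - 1) / (Complex.exp (-w / x) - 1))
        = (x : ℂ) ^ (s - 1) • G (x ^ (-1 : ℝ)) := by
    intro x hx
    have hx' : (0:ℝ) < x := hx
    rw [hGdef]
    simp only [smul_eq_mul]
    rw [Real.rpow_neg_one]
    rw [div_eq_mul_inv, mul_one_div]
    congr 2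
    rw [Complex.ofReal_inv]
    rw [div_eq_mul_inv]
  have hsdiv : s / ((-1 : ℝ) : ℂ) = -s := by push_cast; ring
  constructor
  · have h1 : MellinConvergent (fun t : ℝ => G (t ^ (-1 : ℝ))) s := by
      rw [MellinConvergent.comp_rpow (by norm_num : (-1:ℝ) ≠ 0), hsdiv]
      exact hkey_int'
    unfold MellinConvergent at h1
    refine h1.congr_fun (fun x hx => ?_) measurableSet_Ioi
    rw [hcomp x hx]
  · have h2 : (∫ x in Ioi (0:ℝ), (x : ℂ) ^ (s - 1) / (Complex.exp (-w / x) - 1))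
        = mellin (fun t : ℝ => G (t ^ (-1 : ℝ))) s := by
      rw [mellin]
      refine setIntegral_congr_fun measurableSet_Ioi fun x hx => ?_
      rw [hcomp x hx]
    rw [h2, mellin_comp_rpow, hsdiv]
    have h4 : mellin G (-s) = (-w) ^ s * Complex.Gamma (-s) * riemannZeta (-s) := by
      rw [mellin]
      have h5 : (∫ u in Ioi (0:ℝ), (u : ℂ) ^ (-s - 1) • G u)
          = ∫ u : ℝ in Ioi 0, (u : ℂ) ^ (-s - 1) * (1 / (Complex.exp (-w * u) - 1)) := by
        refine setIntegral_congr_fun measurableSet_Ioi fun u hu => ?_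
        simp [hGdef, smul_eq_mul]
      rw [h5, hkey_val, neg_neg]
    rw [h4]
    norm_num
end

section
/- (Jonquière's formula.) For every complex s with Re s > 1 and every complex z with Re z < 0 and 0 < Im z < 2π: ∑_{k=1}^∞ e^{kz} k^{s−1} = (Γ(s)/(2π)^s) · ( i^s · ∑_{n=0}^∞ (z/(2πi) + n)^{−s} + i^{−s} · ∑_{n=0}^∞ (1 − z/(2πi) + n)^{−s} ), where all powers are principal (in particular i^{±s} = e^{±iπs/2}), and both Hurwitz-type series converge absolutely since Re(z/(2πi)) = Im(z)/(2π) ∈ (0,1). (Here z/(2πi) = 1/2 + Log(−e^z)/(2πi) and 1 − z/(2πi) = 1/2 − Log(−e^z)/(2πi) with the principal logarithm.) -/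
open Complex Real Set MeasureTheory Filter Asymptotics

-- branch lemma
lemma jqr_mul_cpow {x y : ℂ} (hx : x ≠ 0) (hy : y ≠ 0)
    (h : x.arg + y.arg ∈ Set.Ioc (-Real.pi) Real.pi) (t : ℂ) :
    (x * y) ^ t = x ^ t * y ^ t := by
  rw [Complex.cpow_def_of_ne_zero (mul_ne_zero hx hy), Complex.cpow_def_of_ne_zero hx,
    Complex.cpow_def_of_ne_zero hy, (Complex.log_mul_eq_add_log_iff hx hy).mpr h, add_mul,
    Complex.exp_add]

-- norm bound for cpow
lemma jqr_norm_cpow_le (s c : ℂ) (hs : 0 ≤ s.re) {r : ℝ} (hr : 0 < r) (h : r ≤ ‖c‖) :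
    ‖c ^ (-s)‖ ≤ Real.exp (Real.pi * |s.im|) * r ^ (-s.re) := by
  have hc : c ≠ 0 := by
    intro h0; rw [h0, norm_zero] at h; linarith
  calc ‖c ^ (-s)‖ ≤ ‖c‖ ^ (-s).re / Real.exp (c.arg * (-s).im) :=
        Complex.norm_cpow_le c (-s)
    _ = ‖c‖ ^ (-s.re) * Real.exp (c.arg * s.im) := by
        rw [Complex.neg_re, Complex.neg_im, div_eq_mul_inv, ← Real.exp_neg]; ring_nf
    _ ≤ r ^ (-s.re) * Real.exp (Real.pi * |s.im|) := by
        apply mul_le_mul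
        · exact Real.rpow_le_rpow_of_nonpos hr h (by linarith)
        · apply Real.exp_le_exp.mpr
          calc c.arg * s.im ≤ |c.arg * s.im| := le_abs_self _
            _ = |c.arg| * |s.im| := abs_mul _ _
            _ ≤ Real.pi * |s.im| := by
                apply mul_le_mul_of_nonneg_right (Complex.abs_arg_le_pi c) (abs_nonneg _)
        · positivity
        · positivity
    _ = _ := by ring

-- summability of Hurwitz-type series in norm
lemma jqr_summable {w s : ℂ} (hw : 0 < w.re) (hs : 1 < s.re) :
    Summable (fun n : ℕ => ‖(w + n) ^ (-s)‖) := by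
  have hsum : Summable (fun n : ℕ => Real.exp (Real.pi * |s.im|) * (n : ℝ) ^ (-s.re)) :=
    (Real.summable_nat_rpow.mpr (by linarith)).mul_left _
  apply Summable.of_norm_bounded_eventually_nat (g := fun n => Real.exp (Real.pi * |s.im|) * (n : ℝ) ^ (-s.re)) hsum
  filter_upwards [eventually_ge_atTop 1] with n hn
  have hn' : (0:ℝ) < n := by exact_mod_cast hn
  have habs : (n : ℝ) ≤ ‖w + n‖ := by
    calc (n : ℝ) ≤ w.re + n := by linarith
      _ = (w + n).re := by simp
      _ ≤ |(w + n).re| := le_abs_self _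
      _ ≤ ‖w + n‖ := Complex.abs_re_le_norm _
  simpa using jqr_norm_cpow_le s (w + n) (by linarith) hn' habs

lemma jqr_integrable {s : ℂ} (hs : 0 < s.re) {c : ℂ} (hc : 0 < c.re) :
    IntegrableOn (fun t : ℝ => (t:ℂ) ^ (s - 1) * Complex.exp (-(c * t))) (Ioi 0) := by
  have h0 : IntegrableOn (fun t : ℝ => t ^ (s.re - 1) * Real.exp (-(c.re * t))) (Ioi 0) := by
    have := integrableOn_rpow_mul_exp_neg_mul_rpow (p := 1) (s := s.re - 1) (b := c.re)
      (by linarith) zero_lt_one hc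
    simpa [Real.rpow_one] using this
  apply h0.integrable.mono'
  · apply ContinuousOn.aestronglyMeasurable
    · apply ContinuousOn.mul
      · exact fun t ht => (Complex.continuousAt_ofReal_cpow_const _ _
          (Or.inr (by exact_mod_cast ne_of_gt ht))).continuousWithinAt
      · fun_prop
    · exact measurableSet_Ioi
  · filter_upwards [MeasureTheory.ae_restrict_mem measurableSet_Ioi] with t ht
    rw [norm_mul]
    have h1 : ‖(t:ℂ) ^ (s - 1)‖ = t ^ (s.re - 1) := by
      rw [Complex.norm_cpow_eq_rpow_re_of_pos ht]
      simp
    have h2 : ‖Complex.exp (-(c * t))‖ = Real.exp (-(c.re * t)) := by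
      rw [Complex.norm_exp]
      simp
    rw [h1, h2]

lemma jqr_gamma_integral {s : ℂ} (hs : 0 < s.re) {c : ℂ} (hc : 0 < c.re) :
    ∫ t in Ioi (0:ℝ), (t:ℂ) ^ (s - 1) * Complex.exp (-(c * t)) = Complex.Gamma s * c ^ (-s) := by
  set U : Set ℂ := {c : ℂ | 0 < c.re} with hU
  have hUopen : IsOpen U := isOpen_lt continuous_const Complex.continuous_re
  have hUconv : Convex ℝ U := convex_halfSpace_re_gt 0
  set F : ℂ → ℂ := fun c => ∫ t in Ioi (0:ℝ), (t:ℂ) ^ (s - 1) * Complex.exp (-(c * t)) with hF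
  set G : ℂ → ℂ := fun c => Complex.Gamma s * c ^ (-s) with hG
  -- differentiability of F
  have hFdiff : DifferentiableOn ℂ F U := by
    intro c₀ hc₀
    obtain ⟨ε, hε, hball⟩ := Metric.isOpen_iff.mp hUopen c₀ hc₀
    have hε2 : (0:ℝ) < ε/2 := by linarith
    have key : HasDerivAt F (∫ t in Ioi (0:ℝ),
        -(t:ℂ) * ((t:ℂ) ^ (s - 1) * Complex.exp (-(c₀ * t)))) c₀ := by
      have hd : c₀.re - ε/2 > 0 := by
        by_contra h
        push_neg at h
        have : c₀ - (c₀.re : ℂ) + (c₀.re - ε/2 : ℝ) ∈ Metric.ball c₀ ε := by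
          simp only [Metric.mem_ball]
          rw [Complex.dist_eq]
          have : c₀ - (c₀.re:ℂ) + ((c₀.re - ε/2 : ℝ):ℂ) - c₀ = ((- ε/2 : ℝ):ℂ) := by
            push_cast; ring
          rw [this, Complex.norm_real, Real.norm_eq_abs]
          rw [_root_.abs_of_nonpos (by linarith)]
          linarith
        have h2 := hball this
        simp only [hU, Set.mem_setOf_eq, Complex.add_re, Complex.sub_re,
          Complex.ofReal_re] at h2
        linarith
      refine (hasDerivAt_integral_of_dominated_loc_of_deriv_le
        (F := fun (x : ℂ) (t : ℝ) => (t:ℂ) ^ (s - 1) * Complex.exp (-(x * t)))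
        (F' := fun (x : ℂ) (t : ℝ) => -(t:ℂ) * ((t:ℂ) ^ (s - 1) * Complex.exp (-(x * t))))
        (Metric.ball_mem_nhds c₀ hε2) ?_ ?_ ?_
        (bound := fun t => t ^ s.re * Real.exp (-((c₀.re - ε/2) * t))) ?_ ?_ ?_).2
      · filter_upwards with x
        apply ContinuousOn.aestronglyMeasurable _ measurableSet_Ioi
        apply ContinuousOn.mul
        · exact fun t ht => (Complex.continuousAt_ofReal_cpow_const _ _
            (Or.inr (by exact_mod_cast ne_of_gt ht))).continuousWithinAt
        · fun_prop
      · exact jqr_integrable hs hc₀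
      · apply ContinuousOn.aestronglyMeasurable _ measurableSet_Ioi
        apply ContinuousOn.mul
        · fun_prop
        · apply ContinuousOn.mul
          · exact fun t ht => (Complex.continuousAt_ofReal_cpow_const _ _
              (Or.inr (by exact_mod_cast ne_of_gt ht))).continuousWithinAt
          · fun_prop
      · filter_upwards [MeasureTheory.ae_restrict_mem measurableSet_Ioi] with t ht x hx
        have ht' : (0:ℝ) < t := ht
        rw [norm_mul, norm_mul]
        have h1 : ‖(t:ℂ) ^ (s - 1)‖ = t ^ (s.re - 1) := by
          rw [Complex.norm_cpow_eq_rpow_re_of_pos ht']; simp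
        have h2 : ‖Complex.exp (-(x * t))‖ = Real.exp (-(x.re * t)) := by
          rw [Complex.norm_exp]; simp
        have h3 : ‖(-(t:ℂ))‖ = t := by
          simp [abs_of_pos ht']
        rw [h1, h2, h3]
        have hxre : c₀.re - ε/2 ≤ x.re := by
          have := Complex.abs_re_le_norm (x - c₀)
          rw [Metric.mem_ball, Complex.dist_eq] at hx
          have h4 : |x.re - c₀.re| < ε/2 := by
            calc |x.re - c₀.re| = |(x - c₀).re| := by simp
              _ ≤ ‖x - c₀‖ := Complex.abs_re_le_norm _
              _ < ε/2 := hx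
          have := abs_lt.mp h4
          linarith [this.1]
        calc t * (t ^ (s.re - 1) * Real.exp (-(x.re * t)))
            = t ^ s.re * Real.exp (-(x.re * t)) := by
              rw [Real.rpow_sub ht', Real.rpow_one]
              field_simp
          _ ≤ t ^ s.re * Real.exp (-((c₀.re - ε/2) * t)) := by
              apply mul_le_mul_of_nonneg_left _ (Real.rpow_nonneg ht'.le _)
              apply Real.exp_le_exp.mpr
              nlinarith
      · have h := integrableOn_rpow_mul_exp_neg_mul_rpow (p := 1) (s := s.re) (b := c₀.re - ε/2)
          (by linarith) zero_lt_one hd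
        simp only [Real.rpow_one, neg_mul] at h ⊢
        exact h
      · filter_upwards [MeasureTheory.ae_restrict_mem measurableSet_Ioi] with t ht x hx
        have : HasDerivAt (fun x : ℂ => Complex.exp (-(x * t))) (-(t:ℂ) * Complex.exp (-(x * t))) x := by
          have h := (Complex.hasDerivAt_exp (-(x * t))).comp x
            (((hasDerivAt_id x).mul_const (t:ℂ)).neg)
          simpa [mul_comm, Function.comp_def, Pi.neg_def] using h
        simpa [mul_comm, mul_assoc, mul_left_comm] using this.const_mul ((t:ℂ) ^ (s - 1))
    exact (key.differentiableAt).differentiableWithinAt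
  have hGdiff : DifferentiableOn ℂ G U := by
    intro c₀ hc₀
    apply DifferentiableAt.differentiableWithinAt
    apply DifferentiableAt.const_mul
    apply differentiableAt_id.cpow (differentiableAt_const _)
    exact Complex.mem_slitPlane_iff.mpr (Or.inl hc₀)
  -- equality on positive reals
  have hreal : ∀ r : ℝ, 0 < r → F r = G r := by
    intro r hr
    rw [hF, hG]
    simp only
    rw [integral_cpow_mul_exp_neg_mul_Ioi hs hr]
    have harg : ((r:ℂ)).arg ≠ Real.pi := by
      rw [Complex.arg_ofReal_of_nonneg hr.le]
      exact Real.pi_ne_zero.symm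
    rw [one_div, Complex.inv_cpow _ _ harg, ← Complex.cpow_neg, mul_comm]
  -- identity theorem
  have := (hFdiff.analyticOnNhd hUopen).eqOn_of_preconnected_of_frequently_eq
    (hGdiff.analyticOnNhd hUopen) hUconv.isPreconnected (z₀ := 1) (by simp [hU]) ?_
  · exact this hc
  · have htend : Tendsto (fun n : ℕ => (1 + (1:ℂ)/(n+1))) atTop (nhdsWithin 1 {(1:ℂ)}ᶜ) := by
      apply tendsto_nhdsWithin_iff.mpr
      constructor
      · have : Tendsto (fun n : ℕ => (1:ℂ)/(n+1)) atTop (nhds 0) := by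
          simpa using tendsto_one_div_add_atTop_nhds_zero_nat.ofReal
        simpa using (tendsto_const_nhds.add this)
      · filter_upwards with n
        simp only [Set.mem_compl_iff, Set.mem_singleton_iff]
        intro h
        have h1 : (1:ℂ)/(n+1) = 0 := by linear_combination h
        rw [div_eq_zero_iff] at h1
        rcases h1 with h1 | h1
        · exact one_ne_zero h1
        · exact Nat.cast_add_one_ne_zero n h1
    apply htend.frequently
    apply Filter.Frequently.of_forall
    intro n
    have : ((1:ℂ) + 1/(n+1)) = ((1 + 1/(n+1) : ℝ) : ℂ) := by push_cast; ring
    rw [this]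
    apply hreal
    positivity

noncomputable def jqrF (s z : ℂ) : ℝ → ℂ :=
  Set.indicator (Set.Ioi 0) (fun x : ℝ => Complex.exp (x * z) * (x:ℂ) ^ (s - 1))

lemma jqrF_norm_le {s z : ℂ} (hs : 1 < s.re) (hz : z.re < 0) (x : ℝ) :
    ‖jqrF s z x‖ ≤ |x| ^ (s.re - 1) := by
  rw [jqrF, Set.indicator_apply]
  split_ifs with h
  · have hx : (0:ℝ) < x := h
    rw [norm_mul]
    have h1 : ‖(x:ℂ) ^ (s - 1)‖ = x ^ (s.re - 1) := by
      rw [Complex.norm_cpow_eq_rpow_re_of_pos hx]; simp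
    have h2 : ‖Complex.exp (x * z)‖ ≤ 1 := by
      rw [Complex.norm_exp]
      apply Real.exp_le_one_iff.mpr
      have : (↑x * z).re = x * z.re := by simp
      rw [this]
      nlinarith
    calc ‖Complex.exp (↑x * z)‖ * ‖(x:ℂ) ^ (s - 1)‖ ≤ 1 * (x ^ (s.re - 1)) := by
          rw [h1]; exact mul_le_mul_of_nonneg_right h2 (Real.rpow_nonneg hx.le _)
      _ = |x| ^ (s.re - 1) := by rw [one_mul, abs_of_pos hx]
  · simpa using Real.rpow_nonneg (abs_nonneg x) (s.re - 1)

lemma jqrF_continuous {s z : ℂ} (hs : 1 < s.re) (hz : z.re < 0) :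
    Continuous (jqrF s z) := by
  rw [continuous_iff_continuousAt]
  intro x₀
  rcases lt_trichotomy x₀ 0 with h | h | h
  · have : ∀ᶠ x in nhds x₀, jqrF s z x = 0 := by
      filter_upwards [eventually_lt_nhds h] with x hx
      exact Set.indicator_of_notMem (by simpa using hx.le.not_gt) _
    exact continuousAt_const.congr (this.mono fun x hx => hx.symm)
  · subst h
    have h0 : jqrF s z 0 = 0 := Set.indicator_of_notMem (by simp) _
    rw [ContinuousAt, h0]
    apply squeeze_zero_norm (jqrF_norm_le hs hz)
    have hc : ContinuousAt (fun y : ℝ => y ^ (s.re - 1)) |(0:ℝ)| :=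
      Real.continuousAt_rpow_const _ _ (Or.inr (by linarith))
    have : ContinuousAt (fun x : ℝ => |x| ^ (s.re - 1)) 0 :=
      hc.comp _root_.continuous_abs.continuousAt
    have h1 : |(0:ℝ)| ^ (s.re - 1) = 0 := by
      rw [abs_zero, Real.zero_rpow (by linarith)]
    have := this.tendsto
    rw [h1] at this
    exact this
  · have : ∀ᶠ x in nhds x₀, jqrF s z x = Complex.exp (x * z) * (x:ℂ) ^ (s - 1) := by
      filter_upwards [eventually_gt_nhds h] with x hx
      exact Set.indicator_of_mem hx _
    apply ContinuousAt.congr _ (this.mono fun x hx => hx.symm)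
    apply ContinuousAt.mul
    · fun_prop
    · exact Complex.continuousAt_ofReal_cpow_const _ _ (Or.inr (ne_of_gt h))

lemma jqrF_decay {s z : ℂ} (hs : 1 < s.re) (hz : z.re < 0) :
    jqrF s z =O[cocompact ℝ] fun x : ℝ => |x| ^ (-(2:ℝ)) := by
  rw [cocompact_eq_atBot_atTop, isBigO_sup]
  constructor
  · apply IsBigO.of_bound 1
    filter_upwards [eventually_le_atBot (0:ℝ)] with x hx
    have : jqrF s z x = 0 := Set.indicator_of_notMem (by simpa using hx.not_gt) _
    rw [this]
    simp only [norm_zero]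
    positivity
  · apply IsBigO.of_bound 1
    have h1 : Tendsto (fun x : ℝ => x ^ (s.re + 1) * Real.exp (-(-z.re) * x)) atTop (nhds 0) :=
      tendsto_rpow_mul_exp_neg_mul_atTop_nhds_zero _ _ (by linarith)
    have h2 : ∀ᶠ x : ℝ in atTop, x ^ (s.re + 1) * Real.exp (-(-z.re) * x) ≤ 1 := by
      filter_upwards [h1.eventually (eventually_le_nhds one_pos)] with x hx using hx
    filter_upwards [h2, eventually_ge_atTop (1:ℝ)] with x hx hx1
    have hx0 : (0:ℝ) < x := by linarith
    have key : ‖jqrF s z x‖ ≤ x ^ (s.re - 1) * Real.exp (z.re * x) := by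
      rw [jqrF, Set.indicator_of_mem (Set.mem_Ioi.mpr hx0)]
      rw [norm_mul]
      have e1 : ‖(x:ℂ) ^ (s - 1)‖ = x ^ (s.re - 1) := by
        rw [Complex.norm_cpow_eq_rpow_re_of_pos hx0]; simp
      have e2 : ‖Complex.exp (↑x * z)‖ = Real.exp (z.re * x) := by
        rw [Complex.norm_exp]
        congr 1
        simp [mul_comm]
      rw [e1, e2]; ring_nf; exact le_rfl
    calc ‖jqrF s z x‖ ≤ x ^ (s.re - 1) * Real.exp (z.re * x) := key
      _ = (x ^ (s.re + 1) * Real.exp (-(-z.re) * x)) * x ^ (-(2:ℝ)) := by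
          rw [neg_neg]
          rw [show s.re - 1 = (s.re + 1) + (-(2:ℝ)) by ring, Real.rpow_add hx0]
          ring_nf
      _ ≤ 1 * x ^ (-(2:ℝ)) := by
          exact mul_le_mul_of_nonneg_right hx (Real.rpow_nonneg hx0.le _)
      _ ≤ 1 * ‖|x| ^ (-(2:ℝ))‖ := by
          rw [one_mul, one_mul, abs_of_pos hx0]
          exact le_abs_self _

lemma jqrF_fourier {s z : ℂ} (hs : 1 < s.re) (hz : z.re < 0) (ξ : ℝ) :
    FourierTransform.fourier (jqrF s z) ξ =
      Complex.Gamma s * (2 * Real.pi * Complex.I * ξ - z) ^ (-s) := by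
  rw [Real.fourier_real_eq_integral_exp_smul]
  have hc : (0:ℝ) < (2 * Real.pi * Complex.I * ξ - z).re := by
    simp [Complex.sub_re, Complex.mul_re]
    linarith
  calc (∫ v : ℝ, Complex.exp (↑(-2 * Real.pi * v * ξ) * Complex.I) • jqrF s z v)
      = ∫ v : ℝ, Set.indicator (Set.Ioi 0)
          (fun v : ℝ => (v:ℂ) ^ (s - 1) *
            Complex.exp (-((2 * Real.pi * Complex.I * ξ - z) * v))) v := by
        congr 1
        funext v
        rw [jqrF, Set.indicator_apply, Set.indicator_apply]
        split_ifs with h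
        · rw [smul_eq_mul]
          rw [show cexp (↑(-2 * Real.pi * v * ξ) * Complex.I) * (cexp (↑v * z) * ↑v ^ (s - 1))
              = ↑v ^ (s - 1) * (cexp (↑(-2 * Real.pi * v * ξ) * Complex.I) * cexp (↑v * z)) by ring,
            ← Complex.exp_add]
          congr 2
          push_cast
          ring
        · simp
    _ = ∫ v in Set.Ioi (0:ℝ), (v:ℂ) ^ (s - 1) *
          Complex.exp (-((2 * Real.pi * Complex.I * ξ - z) * v)) := by
        rw [integral_indicator measurableSet_Ioi]
    _ = Complex.Gamma s * (2 * Real.pi * Complex.I * ξ - z) ^ (-s) :=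
        jqr_gamma_integral (by linarith) hc

lemma jqr_arg_pos {u : ℂ} (him : 0 < u.im) : 0 < u.arg := by
  rcases lt_trichotomy u.arg 0 with h | h | h
  · exact absurd (Complex.arg_neg_iff.mp h) (by linarith)
  · exfalso
    have := Complex.arg_eq_zero_iff.mp h
    linarith [this.2]
  · exact h

lemma jqr_cpow_neg_I {u : ℂ} (s : ℂ) (hre : 0 < u.re) (him : 0 < u.im) :
    (-(2 * ↑Real.pi * Complex.I * u)) ^ (-s) =
      ((2 * Real.pi : ℝ) : ℂ) ^ (-s) * Complex.I ^ s * u ^ (-s) := by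
  have hu : u ≠ 0 := fun h => by simp [h] at hre
  have harg1 : u.arg < Real.pi / 2 := by
    have := Complex.abs_arg_lt_pi_div_two_iff.mpr (Or.inl hre)
    exact (abs_lt.mp this).2
  have harg0 : 0 < u.arg := jqr_arg_pos him
  have hIu : -Complex.I * u ≠ 0 := mul_ne_zero (by simp [Complex.I_ne_zero]) hu
  have step1 : (-(2 * ↑Real.pi * Complex.I * u)) = ((2 * Real.pi : ℝ) : ℂ) * (-Complex.I * u) := by
    push_cast; ring
  rw [step1, jqr_mul_cpow (Complex.ofReal_ne_zero.mpr (by positivity)) hIu ?h1 (-s),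
    jqr_mul_cpow (x := -Complex.I) (by simp [Complex.I_ne_zero]) hu ?h2 (-s)]
  · have : (-Complex.I) ^ (-s) = Complex.I ^ s := by
      rw [Complex.cpow_def_of_ne_zero (by simp [Complex.I_ne_zero]),
        Complex.cpow_def_of_ne_zero Complex.I_ne_zero, Complex.log_neg_I, Complex.log_I]
      congr 1
      ring
    rw [this, mul_assoc]
  case h1 =>
    rw [Complex.arg_ofReal_of_nonneg (by positivity), zero_add]
    exact ⟨Complex.neg_pi_lt_arg _, Complex.arg_le_pi _⟩
  case h2 =>
    rw [Complex.arg_neg_I]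
    constructor
    · nlinarith [Real.pi_pos]
    · nlinarith [Real.pi_pos]

lemma jqr_cpow_I {v : ℂ} (s : ℂ) (hre : 0 < v.re) (him : v.im < 0) :
    (2 * ↑Real.pi * Complex.I * v) ^ (-s) =
      ((2 * Real.pi : ℝ) : ℂ) ^ (-s) * Complex.I ^ (-s) * v ^ (-s) := by
  have hv : v ≠ 0 := fun h => by simp [h] at hre
  have harg1 : -(Real.pi / 2) < v.arg := by
    have := Complex.abs_arg_lt_pi_div_two_iff.mpr (Or.inl hre)
    exact (abs_lt.mp this).1
  have harg0 : v.arg < 0 := Complex.arg_neg_iff.mpr him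
  have hIv : Complex.I * v ≠ 0 := mul_ne_zero Complex.I_ne_zero hv
  have step1 : (2 * ↑Real.pi * Complex.I * v) = ((2 * Real.pi : ℝ) : ℂ) * (Complex.I * v) := by
    push_cast; ring
  rw [step1, jqr_mul_cpow (Complex.ofReal_ne_zero.mpr (by positivity)) hIv ?h1 (-s),
    jqr_mul_cpow (x := Complex.I) Complex.I_ne_zero hv ?h2 (-s), mul_assoc]
  case h1 =>
    rw [Complex.arg_ofReal_of_nonneg (by positivity), zero_add]
    exact ⟨Complex.neg_pi_lt_arg _, Complex.arg_le_pi _⟩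
  case h2 =>
    rw [Complex.arg_I]
    constructor
    · nlinarith [Real.pi_pos]
    · nlinarith [Real.pi_pos]

lemma jqr_summable_fourier {s z : ℂ} (hs : 1 < s.re) (hz : z.re < 0) :
    Summable (fun n : ℤ => FourierTransform.fourier (jqrF s z) n) := by
  have hrw : (fun n : ℤ => FourierTransform.fourier (jqrF s z) n) =
      fun n : ℤ => Complex.Gamma s * (2 * Real.pi * Complex.I * n - z) ^ (-s) := by
    funext n
    exact jqrF_fourier hs hz n
  rw [hrw]
  set C : ℝ := ‖Complex.Gamma s‖ * (Real.exp (Real.pi * |s.im|) * Real.pi ^ (-s.re)) with hC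
  apply Summable.of_norm_bounded_eventually (g := fun n : ℤ => C * |(n:ℝ)| ^ (-s.re))
    ((Real.summable_abs_int_rpow (by linarith)).mul_left C)
  have hev : ∀ᶠ n : ℤ in cofinite, ‖z‖ ≤ Real.pi * |(n:ℝ)| ∧ 1 ≤ |(n:ℝ)| := by
    rw [Int.cofinite_eq, eventually_sup]
    obtain ⟨N, hN⟩ := exists_nat_ge (‖z‖ / Real.pi)
    constructor
    · filter_upwards [eventually_le_atBot (-(N+1) : ℤ)] with n hn
      have hn' : (n:ℝ) ≤ -((N:ℝ)+1) := by exact_mod_cast hn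
      have h1 : ((N:ℝ) + 1) ≤ |(n:ℝ)| := by
        rw [_root_.abs_of_nonpos (by linarith [Nat.cast_nonneg (α := ℝ) N])]
        linarith
      constructor
      · have : ‖z‖ ≤ Real.pi * N := by
          rw [div_le_iff₀ Real.pi_pos] at hN
          linarith [hN]
        calc ‖z‖ ≤ Real.pi * N := this
          _ ≤ Real.pi * |(n:ℝ)| := by nlinarith [Real.pi_pos]
      · linarith [Nat.cast_nonneg (α := ℝ) N]
    · filter_upwards [eventually_ge_atTop ((N+1) : ℤ)] with n hn
      have hn' : ((N:ℝ)+1) ≤ (n:ℝ) := by exact_mod_cast hn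
      have h1 : ((N:ℝ) + 1) ≤ |(n:ℝ)| := by
        rw [_root_.abs_of_nonneg (by linarith [Nat.cast_nonneg (α := ℝ) N])]
        linarith
      constructor
      · have : ‖z‖ ≤ Real.pi * N := by
          rw [div_le_iff₀ Real.pi_pos] at hN
          linarith [hN]
        calc ‖z‖ ≤ Real.pi * N := this
          _ ≤ Real.pi * |(n:ℝ)| := by nlinarith [Real.pi_pos]
      · linarith [Nat.cast_nonneg (α := ℝ) N]
  filter_upwards [hev] with n hn
  obtain ⟨hn1, hn2⟩ := hn
  have hr : (0:ℝ) < Real.pi * |(n:ℝ)| := by nlinarith [Real.pi_pos]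
  have habs : Real.pi * |(n:ℝ)| ≤ ‖2 * Real.pi * Complex.I * n - z‖ := by
    have h1 : ‖2 * Real.pi * Complex.I * n‖ = 2 * Real.pi * |(n:ℝ)| := by
      simp [abs_of_pos Real.pi_pos]
    calc Real.pi * |(n:ℝ)|
        = 2 * Real.pi * |(n:ℝ)| - Real.pi * |(n:ℝ)| := by ring
      _ ≤ ‖2 * Real.pi * Complex.I * n‖ - ‖z‖ := by
          rw [h1]; linarith
      _ ≤ ‖2 * Real.pi * Complex.I * n - z‖ := by
          have := norm_sub_norm_le (2 * Real.pi * Complex.I * n) z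
          linarith [this]
  rw [norm_mul]
  calc ‖Complex.Gamma s‖ * ‖(2 * Real.pi * Complex.I * n - z) ^ (-s)‖
      ≤ ‖Complex.Gamma s‖ * (Real.exp (Real.pi * |s.im|) * (Real.pi * |(n:ℝ)|) ^ (-s.re)) :=
        mul_le_mul_of_nonneg_left
          (jqr_norm_cpow_le s _ (by linarith) hr habs) (norm_nonneg _)
    _ = C * |(n:ℝ)| ^ (-s.re) := by
        rw [Real.mul_rpow Real.pi_pos.le (abs_nonneg _), hC]
        ring


/-- Jonquière's formula: for `Re s > 1` and `Re z < 0`, `0 < Im z < 2π`,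
`∑_{k≥1} e^{kz} k^{s−1} = (Γ(s)/(2π)^s)(i^s ζ(s, z/(2πi)) + i^{−s} ζ(s, 1 − z/(2πi)))`,
with both Hurwitz-type series converging absolutely (all powers principal). -/
theorem jonquiere (s z : ℂ) (hs : 1 < s.re) (hz : z.re < 0)
    (hz1 : 0 < z.im) (hz2 : z.im < 2 * Real.pi) :
    Summable (fun n : ℕ => ‖(z / (2 * Real.pi * Complex.I) + n) ^ (-s)‖) ∧
    Summable (fun n : ℕ => ‖(1 - z / (2 * Real.pi * Complex.I) + n) ^ (-s)‖) ∧
    ∑' k : ℕ, Complex.exp (((k : ℂ) + 1) * z) * ((k : ℂ) + 1) ^ (s - 1) =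
      Complex.Gamma s / ((2 * Real.pi : ℝ) : ℂ) ^ s *
        (Complex.I ^ s * ∑' n : ℕ, (z / (2 * Real.pi * Complex.I) + n) ^ (-s) +
         Complex.I ^ (-s) * ∑' n : ℕ, (1 - z / (2 * Real.pi * Complex.I) + n) ^ (-s)) := by
  set w : ℂ := z / (2 * Real.pi * Complex.I) with hwdef
  have h2πI : (2 * (Real.pi:ℂ) * Complex.I) ≠ 0 := by
    simp [Complex.I_ne_zero, Real.pi_ne_zero]
  have hzw : (2 * (Real.pi:ℂ) * Complex.I) * w = z := by
    rw [hwdef]; field_simp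
  have hzre : z.re = -(2 * Real.pi) * w.im := by
    rw [← hzw]
    simp [Complex.mul_re, Complex.mul_im]
  have hzim : z.im = 2 * Real.pi * w.re := by
    rw [← hzw]
    simp [Complex.mul_re, Complex.mul_im]
  have hwre : 0 < w.re := by
    nlinarith [Real.pi_pos]
  have hwre1 : w.re < 1 := by
    nlinarith [Real.pi_pos]
  have hwim : 0 < w.im := by
    nlinarith [Real.pi_pos]
  have h1wre : 0 < (1 - w).re := by
    simp [Complex.sub_re]; linarith
  clear_value w
  refine ⟨jqr_summable hwre hs, jqr_summable h1wre hs, ?_⟩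
  -- Poisson summation
  have hpois := Real.tsum_eq_tsum_fourier_of_rpow_decay_of_summable
    (jqrF_continuous hs hz) one_lt_two
    (by simpa using jqrF_decay hs hz) (jqr_summable_fourier hs hz) 0
  simp only [zero_add] at hpois
  have hfour : ∀ n : ℤ, (fourier n) ((0:ℝ) : UnitAddCircle) = 1 := by
    intro n
    norm_cast
    exact fourier_eval_zero n
  simp only [hfour, mul_one] at hpois
  -- LHS
  have hlhs : ∑' n : ℤ, jqrF s z n =
      ∑' k : ℕ, Complex.exp (((k : ℂ) + 1) * z) * ((k : ℂ) + 1) ^ (s - 1) := by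
    rw [← Function.Injective.tsum_eq (g := fun k : ℕ => (k + 1 : ℤ))
      (f := fun n : ℤ => jqrF s z n) (fun a b h => by simpa using h) ?hsupp]
    · congr 1
      funext k
      have hk : ((k + 1 : ℤ) : ℝ) ∈ Set.Ioi (0:ℝ) := by
        simp only [Set.mem_Ioi]
        push_cast
        positivity
      show jqrF s z (((k+1 : ℤ)):ℝ) = _
      rw [jqrF, Set.indicator_of_mem hk]
      push_cast
      ring_nf
    case hsupp =>
      intro n hn
      have : (0:ℝ) < (n:ℝ) := by
        by_contra h
        exact hn (Set.indicator_of_notMem (by simpa using h) _)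
      have hn1 : 1 ≤ n := by exact_mod_cast this
      exact ⟨(n - 1).toNat, by show ((n-1).toNat + 1 : ℤ) = n; omega⟩
  -- RHS
  have hrw : (fun n : ℤ => FourierTransform.fourier (jqrF s z) n) =
      fun n : ℤ => Complex.Gamma s * (2 * Real.pi * Complex.I * n - z) ^ (-s) := by
    funext n
    exact jqrF_fourier hs hz n
  have hneg : ∑' n : ℤ, Complex.Gamma s * (2 * Real.pi * Complex.I * n - z) ^ (-s) =
      ∑' n : ℤ, Complex.Gamma s * (2 * Real.pi * Complex.I * (-n) - z) ^ (-s) :=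
    ((Equiv.neg ℤ).tsum_eq (fun n : ℤ => Complex.Gamma s *
      (2 * Real.pi * Complex.I * n - z) ^ (-s))).symm.trans (by simp [Equiv.neg_apply])
  -- sums over ℕ
  have hsum1 : Summable (fun m : ℕ => (w + m) ^ (-s)) := (jqr_summable hwre hs).of_norm
  have hsum2 : Summable (fun m : ℕ => (1 - w + m) ^ (-s)) := (jqr_summable h1wre hs).of_norm
  have hterm1 : ∀ m : ℕ, Complex.Gamma s * (2 * Real.pi * Complex.I * (-(m:ℤ)) - z) ^ (-s) =
      Complex.Gamma s * ((2 * Real.pi : ℝ):ℂ) ^ (-s) * Complex.I ^ s * (w + m) ^ (-s) := by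
    intro m
    have harg : (2 * (Real.pi:ℂ) * Complex.I * (-(m:ℤ)) - z) = -(2 * (Real.pi:ℂ) * Complex.I * (w + m)) := by
      push_cast
      linear_combination hzw
    rw [harg, jqr_cpow_neg_I s (by simp [Complex.add_re]; positivity) (by simpa using hwim)]
    ring
  have hterm2 : ∀ m : ℕ, Complex.Gamma s * (2 * Real.pi * Complex.I * (-(Int.negSucc m)) - z) ^ (-s) =
      Complex.Gamma s * ((2 * Real.pi : ℝ):ℂ) ^ (-s) * Complex.I ^ (-s) * (1 - w + m) ^ (-s) := by
    intro m
    have harg : (2 * (Real.pi:ℂ) * Complex.I * (-(Int.negSucc m)) - z) =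
        2 * (Real.pi:ℂ) * Complex.I * (1 - w + m) := by
      rw [Int.negSucc_eq]
      push_cast
      linear_combination hzw
    rw [harg, jqr_cpow_I s (by simp [Complex.add_re, Complex.sub_re]; linarith)
      (by simp [Complex.add_im, Complex.sub_im]; linarith)]
    ring
  have hH1 : HasSum (fun m : ℕ => Complex.Gamma s * (2 * Real.pi * Complex.I * (-(m:ℤ)) - z) ^ (-s))
      (Complex.Gamma s * ((2 * Real.pi : ℝ):ℂ) ^ (-s) * Complex.I ^ s * ∑' m : ℕ, (w + m) ^ (-s)) := by
    have := (hsum1.hasSum).mul_left (Complex.Gamma s * ((2 * Real.pi : ℝ):ℂ) ^ (-s) * Complex.I ^ s)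
    exact this.congr_fun hterm1
  have hH2 : HasSum (fun m : ℕ => Complex.Gamma s * (2 * Real.pi * Complex.I * (-(Int.negSucc m)) - z) ^ (-s))
      (Complex.Gamma s * ((2 * Real.pi : ℝ):ℂ) ^ (-s) * Complex.I ^ (-s) * ∑' m : ℕ, (1 - w + m) ^ (-s)) := by
    have := (hsum2.hasSum).mul_left (Complex.Gamma s * ((2 * Real.pi : ℝ):ℂ) ^ (-s) * Complex.I ^ (-s))
    exact this.congr_fun hterm2
  have hsplit : ∑' n : ℤ, Complex.Gamma s * (2 * Real.pi * Complex.I * (-n) - z) ^ (-s) =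
      Complex.Gamma s * ((2 * Real.pi : ℝ):ℂ) ^ (-s) * Complex.I ^ s * (∑' m : ℕ, (w + m) ^ (-s)) +
      Complex.Gamma s * ((2 * Real.pi : ℝ):ℂ) ^ (-s) * Complex.I ^ (-s) * (∑' m : ℕ, (1 - w + m) ^ (-s)) := by
    have hseq : (fun n : ℤ => Complex.Gamma s * (2 * Real.pi * Complex.I * (-n) - z) ^ (-s)) =
        fun n : ℤ => Int.rec
          (fun m : ℕ => Complex.Gamma s * (2 * Real.pi * Complex.I * (-(m:ℤ)) - z) ^ (-s))
          (fun m : ℕ => Complex.Gamma s * (2 * Real.pi * Complex.I * (-(Int.negSucc m)) - z) ^ (-s)) n := by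
      funext n
      cases n with
      | ofNat m => rfl
      | negSucc m => rfl
    rw [hseq]
    exact (hH1.int_rec hH2).tsum_eq
  -- assemble
  rw [← hlhs, hpois, hrw, hneg, hsplit]
  rw [Complex.cpow_neg, div_eq_mul_inv]
  push_cast
  ring
end

section
/- For every integer N ≥ 10, every integer j with 1 ≤ j ≤ N/10, and every complex z with Im z = 5 and −N^{−7/8} ≤ Re z ≤ 0: 1 + e^{2j·Re(z)/N} − 2·cos(5j/N)·e^{j·Re(z)/N} ≥ (11 j²)/(12 N²) · ( (Re z)² + 25 ). Equivalently, |1 − e^{zj/N}|² ≥ (11 j²)/(12 N²) · ((Re z)² + 25). -/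
set_option maxHeartbeats 1000000 in
/-- The polynomial lower bound used in Lemma 4.1: for `N ≥ 10`, `1 ≤ j ≤ N/10`,
`Im z = 5` and `−N^{−7/8} ≤ Re z ≤ 0`,
`1 + e^{2j·Re z/N} − 2cos(5j/N)e^{j·Re z/N} ≥ (11j²/(12N²))((Re z)² + 25)`;
equivalently `|1 − e^{zj/N}|² ≥ (11j²/(12N²))((Re z)² + 25)`. -/
theorem small_j_lower_bound (N : ℕ) (hN : 10 ≤ N) (j : ℕ) (hj1 : 1 ≤ j)
    (hj2 : (j : ℝ) ≤ (N : ℝ) / 10) (z : ℂ) (hzim : z.im = 5)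
    (hre1 : -((N : ℝ) ^ (-(7 : ℝ) / 8)) ≤ z.re) (hre2 : z.re ≤ 0) :
    (11 * (j : ℝ) ^ 2) / (12 * (N : ℝ) ^ 2) * (z.re ^ 2 + 25) ≤
      1 + Real.exp (2 * j * z.re / N)
        - 2 * Real.cos (5 * j / N) * Real.exp (j * z.re / N) ∧
    (11 * (j : ℝ) ^ 2) / (12 * (N : ℝ) ^ 2) * (z.re ^ 2 + 25) ≤
      ‖1 - Complex.exp (z * j / N)‖ ^ 2 := by
  have hNpos : (0:ℝ) < N := by positivity
  have hN0 : (N:ℝ) ≠ 0 := ne_of_gt hNpos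
  have hN' : (10:ℝ) ≤ (N:ℝ) := by exact_mod_cast hN
  set x : ℝ := z.re with hx
  set t : ℝ := (j:ℝ) / N with ht
  clear_value x t
  have hjpos : (0:ℝ) < (j:ℝ) := by exact_mod_cast hj1
  have ht0 : 0 < t := by rw [ht]; positivity
  have ht10 : t ≤ 1 / 10 := by
    rw [ht, div_le_div_iff₀ hNpos (by norm_num)]
    nlinarith
  -- bound on N^{-7/8}
  have hNbig : (3:ℝ) ≤ (N:ℝ) ^ ((7:ℝ)/8) := by
    have h1 : (3:ℝ) ≤ (N:ℝ) ^ ((1:ℝ)/2) := by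
      have h9 : ((9:ℝ)) ^ ((1:ℝ)/2) = 3 := by
        rw [show (9:ℝ) = 3 ^ (2:ℕ) by norm_num, ← Real.rpow_natCast 3 2,
          ← Real.rpow_mul (by norm_num)]
        norm_num
      have h2 : ((9:ℝ)) ^ ((1:ℝ)/2) ≤ (N:ℝ) ^ ((1:ℝ)/2) :=
        Real.rpow_le_rpow (by norm_num) (by linarith) (by norm_num)
      linarith
    have h2 : (N:ℝ) ^ ((1:ℝ)/2) ≤ (N:ℝ) ^ ((7:ℝ)/8) :=
      Real.rpow_le_rpow_of_exponent_le (by linarith) (by norm_num)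
    linarith
  have hrbound : (N:ℝ) ^ (-(7:ℝ)/8) ≤ 1/3 := by
    rw [show (-(7:ℝ)/8) = -((7:ℝ)/8) by ring, Real.rpow_neg (le_of_lt hNpos)]
    rw [inv_le_comm₀ (by positivity) (by norm_num)]
    simpa using hNbig
  have hx1 : -(1/3 : ℝ) ≤ x := by linarith
  -- the exponent a = t * x
  have ha0 : t * x ≤ 0 := mul_nonpos_of_nonneg_of_nonpos (le_of_lt ht0) hre2
  have ha1 : -(1/30 : ℝ) ≤ t * x := by nlinarith
  set E : ℝ := Real.exp (t * x) with hE
  clear_value E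
  have hEpos : 0 < E := hE ▸ Real.exp_pos _
  have hE1 : E ≤ 1 := hE ▸ Real.exp_le_one_iff.mpr ha0
  have hElow : 29/30 ≤ E := by
    have h := Real.add_one_le_exp (t * x)
    rw [← hE] at h
    linarith
  -- (1 - E)^2 ≥ (t*x)^2 * E^2
  have hEsub : -(t*x) * E ≤ 1 - E := by
    have h := Real.add_one_le_exp (-(t * x))
    have hinv : Real.exp (-(t*x)) = E⁻¹ := by rw [Real.exp_neg, hE]
    rw [hinv] at h
    have h2 := (mul_le_mul_of_nonneg_right h (le_of_lt hEpos))
    rw [inv_mul_cancel₀ (ne_of_gt hEpos)] at h2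
    nlinarith
  have hsq : (t*x)^2 * E^2 ≤ (1 - E)^2 := by
    have h1 : 0 ≤ -(t*x) * E := mul_nonneg (by linarith) (le_of_lt hEpos)
    nlinarith
  -- cosine bound : 1 - cos(5t) ≥ (3969/8192) * (5t)^2
  have hu1 : 5 * t ≤ 1/2 := by linarith
  have hs : (5*t/2) - (5*t/2)^3/4 < Real.sin (5*t/2) :=
    by
      have h := Real.sin_gt_sub_cube (x := 5*t/2) (by linarith)
      have hc : 0 ≤ (5*t/2)^3 := by positivity
      linarith
  have hsin_low : (63/64) * (5*t/2) ≤ Real.sin (5*t/2) := by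
    have h3 : 0 ≤ (5*t/2) * (1/4 - 5*t/2) :=
      mul_nonneg (by linarith) (by linarith)
    nlinarith [h3, ht0.le]
  have hsin_pos : (0:ℝ) ≤ 63/64 * (5*t/2) := by positivity
  have hcos_id : Real.cos (5*t) = Real.cos (5*t/2)^2 - Real.sin (5*t/2)^2 := by
    have h := Real.cos_two_mul' (5*t/2)
    rw [show 2*(5*t/2) = 5*t by ring] at h
    exact h
  have hpyth := Real.sin_sq_add_cos_sq (5*t/2)
  have hcos : (3969/8192) * (5*t)^2 ≤ 1 - Real.cos (5*t) := by
    have hprod := mul_le_mul hsin_low hsin_low hsin_pos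
      (le_trans hsin_pos hsin_low)
    nlinarith [hprod]
  have hcos_nonneg : (0:ℝ) ≤ 1 - Real.cos (5*t) :=
    le_trans (by positivity) hcos
  -- main real inequality
  have key : (11 * (j : ℝ) ^ 2) / (12 * (N : ℝ) ^ 2) * (x ^ 2 + 25) ≤
      1 + E^2 - 2 * Real.cos (5*t) * E := by
    have hLHS : (11 * (j : ℝ) ^ 2) / (12 * (N : ℝ) ^ 2) * (x ^ 2 + 25)
        = 11/12 * t^2 * x^2 + 275/12 * t^2 := by
      rw [ht]; field_simp; ring
    have hrw : 1 + E^2 - 2 * Real.cos (5*t) * E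
        = (1 - E)^2 + 2 * (1 - Real.cos (5*t)) * E := by ring
    rw [hLHS, hrw]
    have hE2 : (11:ℝ)/12 ≤ E^2 := by nlinarith
    have hterm1 : 11/12 * t^2 * x^2 ≤ (1 - E)^2 := by
      have h := mul_le_mul_of_nonneg_left hE2 (sq_nonneg (t*x))
      nlinarith [h, hsq]
    have hterm2 : 275/12 * t^2 ≤ 2 * (1 - Real.cos (5*t)) * E := by
      have h := mul_le_mul hcos hElow (by norm_num) hcos_nonneg
      nlinarith [h]
    linarith
  -- identify the two expressions in the goal
  have hexp2 : Real.exp (2 * (j:ℝ) * x / N) = E^2 := by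
    rw [hE, sq, ← Real.exp_add]
    congr 1
    rw [ht]
    field_simp
    try ring
  have hexp1 : Real.exp ((j:ℝ) * x / N) = E := by
    rw [hE]; congr 1; rw [ht]; ring
  have hcosarg : (5 * (j:ℝ) / N) = 5 * t := by rw [ht]; ring
  constructor
  · rw [hexp2, hexp1, hcosarg]; exact key
  · -- norm computation
    have hweq : z * (j:ℂ) / (N:ℂ) = (((j:ℝ)/(N:ℝ) : ℝ) : ℂ) * z := by
      push_cast
      ring
    have hwre : (z * (j:ℂ) / (N:ℂ)).re = t * x := by
      rw [hweq, Complex.re_ofReal_mul, ← hx, ht]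
      try ring
    have hwim : (z * (j:ℂ) / (N:ℂ)).im = 5 * t := by
      rw [hweq, Complex.im_ofReal_mul, hzim, ht]
      try ring
    have hnorm : ‖1 - Complex.exp (z * j / N)‖ ^ 2
        = 1 + E^2 - 2 * Real.cos (5*t) * E := by
      rw [Complex.sq_norm, Complex.normSq_apply]
      simp only [Complex.sub_re, Complex.sub_im, Complex.one_re, Complex.one_im,
        Complex.exp_re, Complex.exp_im, hwre, hwim]
      have hp := Real.sin_sq_add_cos_sq (5*t)
      rw [← hE]
      linear_combination E^2 * hp
    rw [hnorm]
    exact key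
end
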